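/- arXiv:2401.08802 — 2 statements merged into one kernel-verified Lean document; each statement's English description precedes it below -/
import Mathlib

section
/- Assuming only conditions (LY1) and (LY2) (the covering condition (SC) is not needed), one has sup_j sup_n ‖ℒ_j^n 𝟙‖_∞ < ∞, where 𝟙 denotes the constant function equal to 1. -/
open MeasureTheory ENNReal Filter

universe u

/-- Iterates `ℒ_j^n = ℒ_{j+n-1} ∘ ⋯ ∘ ℒ_{j+1} ∘ ℒ_j` of a sequence of linear operators
acting on spaces of complex-valued functions. -/
noncomputable def iterL {X : ℕ → Type u} (L : ∀ j, (X j → ℂ) →ₗ[ℂ] (X (j+1) → ℂ)) (j : ℕ) :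
    (n : ℕ) → (X j → ℂ) →ₗ[ℂ] (X (j+n) → ℂ)
  | 0 => LinearMap.id
  | n+1 => (L (j+n)).comp (iterL L j n)

/-- The coercion of a real-valued function to a complex-valued function. -/
noncomputable def cR {α : Type u} (h : α → ℝ) : α → ℂ := fun x => (h x : ℂ)

/-- The sequential dynamical systems setup: probability spaces `(X_j, 𝓑_j, m_j)`,
variations `v_j` satisfying (V1)-(V7), maps `T_j : X_j → X_{j+1}` satisfying (V8),
with transfer operators `ℒ_j` satisfying the duality relation,
the Lasota-Yorke conditions (LY1) and (LY2) (the covering condition (SC) is not assumed). -/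
structure SeqDSnoSC where
  X : ℕ → Type u
  measX : ∀ j, MeasurableSpace (X j)
  topX : ∀ j, TopologicalSpace (X j)
  m : ∀ j, @Measure (X j) (measX j)
  mProb : ∀ j, IsProbabilityMeasure (m j)
  /-- the notions of variation -/
  v : ∀ j, (X j → ℂ) → ℝ≥0∞
  V1 : ∀ j (t : ℂ) (h : X j → ℂ), v j (fun x => t * h x) = (‖t‖₊ : ℝ≥0∞) * v j h
  V2 : ∀ j (g h : X j → ℂ), v j (fun x => g x + h x) ≤ v j g + v j h
  Cvar : ℝ≥0∞
  CvarPos : 0 < Cvar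
  CvarFin : Cvar < ⊤
  V3 : ∀ j (h : X j → ℂ), eLpNorm h ⊤ (m j) ≤ eLpNorm h 1 (m j) + Cvar * v j h
  Cone : ℝ≥0∞
  ConeFin : Cone < ⊤
  V4 : ∀ j, v j (fun _ => 1) ≤ Cone
  C5 : ℝ≥0∞
  C5Fin : C5 < ⊤
  V5 : ∀ j (f g : X j → ℂ),
    v j (fun x => f x * g x) ≤ C5 * (eLpNorm f ⊤ (m j) * v j g + eLpNorm g ⊤ (m j) * v j f)
  C6 : ℝ → ℝ≥0∞ → ℝ≥0∞
  C6mono : ∀ ⦃c c' : ℝ⦄ ⦃y y' : ℝ≥0∞⦄, c ≤ c' → y ≤ y' → C6 c y ≤ C6 c' y'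
  V6 : ∀ j (h : X j → ℝ) (c : ℝ), 0 < c → (∀ x, c ≤ h x) →
      v j (cR h) < ⊤ →
      v j (fun x => ((h x : ℂ))⁻¹) ≤ C6 c (v j (cR h) + eLpNorm (cR h) 1 (m j))
  V7 : ∀ j (g : X j → ℂ), @Continuous _ _ (topX j) _ g → (∃ C, ∀ x, ‖g x‖ ≤ C) →
      ∀ ε : ℝ, 0 < ε → ∃ h : X j → ℂ,
        (∃ C, ∀ x, ‖h x‖ ≤ C) ∧ v j h < ⊤ ∧ ∀ x, ‖g x - h x‖ ≤ ε
  /-- the maps `T_j : X_j → X_{j+1}` -/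
  T : ∀ j, X j → X (j+1)
  Tmeas : ∀ j, @Measurable _ _ (measX j) (measX (j+1)) (T j)
  Tac : ∀ j, (m j).map (T j) ≪ m (j+1)
  CV8 : ℝ≥0∞
  CV8Fin : CV8 < ⊤
  V8 : ∀ j (h : X (j+1) → ℂ), v (j+1) h ≤ 1 → v j (fun x => h (T j x)) ≤ CV8
  /-- the transfer operators `ℒ_j` -/
  L : ∀ j, (X j → ℂ) →ₗ[ℂ] (X (j+1) → ℂ)
  Ldual : ∀ j (f : X (j+1) → ℂ) (g : X j → ℂ),
      @Measurable _ _ (measX (j+1)) _ f → @Measurable _ _ (measX j) _ g →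
      (∃ C, ∀ y, ‖f y‖ ≤ C) → (∃ C, ∀ x, ‖g x‖ ≤ C) →
      ∫ x, f (T j x) * g x ∂ (m j) = ∫ y, f y * (L j g) y ∂ (m (j+1))
  CL : ℝ≥0∞
  CLFin : CL < ⊤
  LY1 : ∀ j (h : X j → ℂ),
      eLpNorm (L j h) 1 (m (j+1)) + v (j+1) (L j h) ≤ CL * (eLpNorm h 1 (m j) + v j h)
  ρ : ℝ≥0∞
  ρpos : 0 < ρ
  ρlt : ρ < 1
  K : ℝ≥0∞
  Kge : 1 ≤ K
  KFin : K < ⊤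
  N : ℕ
  LY2 : ∀ j (h : X j → ℝ),
      v (j+N) (iterL L j N (cR h)) ≤ ρ * v j (cR h) + K * eLpNorm (cR h) 1 (m j)

namespace SeqDSnoSC

variable (S : SeqDSnoSC.{u})

/-- The BV norm `‖h‖_BV = ‖h‖_{L¹(m_j)} + v_j(h)`. -/
noncomputable def BV (j : ℕ) (h : S.X j → ℂ) : ℝ≥0∞ := eLpNorm h 1 (S.m j) + S.v j h

/-- The compositions `T_0^j = T_{j-1} ∘ ⋯ ∘ T_1 ∘ T_0`. -/
def T0 : (j : ℕ) → S.X 0 → S.X j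
  | 0 => id
  | j+1 => fun x => S.T j (T0 j x)

end SeqDSnoSC


/-! ### Auxiliary lemmas -/

section AuxTransport

/-- Transport a predicate on indexed function spaces along an equality of indices. -/
lemma transportP {X : ℕ → Type u} (P : ∀ i, (X i → ℂ) → Prop) :
    ∀ {i₁ i₂ : ℕ}, i₁ = i₂ → ∀ {f₁ : X i₁ → ℂ} {f₂ : X i₂ → ℂ},
      HEq f₁ f₂ → P i₁ f₁ → P i₂ f₂ := by
  intro i₁ i₂ h
  subst h
  intro f₁ f₂ hf hp
  cases hf
  exact hp

lemma heqL {X : ℕ → Type u} (L : ∀ j, (X j → ℂ) →ₗ[ℂ] (X (j+1) → ℂ)) {i₁ i₂ : ℕ}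
    (h : i₁ = i₂) {f₁ : X i₁ → ℂ} {f₂ : X i₂ → ℂ} (hf : HEq f₁ f₂) :
    HEq (L i₁ f₁) (L i₂ f₂) := by
  subst h; cases hf; rfl

lemma iterL_heq {X : ℕ → Type u} (L : ∀ j, (X j → ℂ) →ₗ[ℂ] (X (j+1) → ℂ)) (j a : ℕ)
    (g : X j → ℂ) : ∀ b, HEq (iterL L j (a+b) g) (iterL L (j+a) b (iterL L j a g))
  | 0 => HEq.rfl
  | b+1 => heqL L (Nat.add_assoc j a b).symm (iterL_heq L j a g b)

end AuxTransport

namespace SeqDSnoSC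

variable (S : SeqDSnoSC.{u})

/-- Any ℂ-valued a.e.-zero function has zero variation: it factors as a product of two
a.e.-zero functions, and (V5) applies with both `eLpNorm _ ⊤` factors equal to `0`. -/
lemma v_null {i : ℕ} {h : S.X i → ℂ} (hh : h =ᵐ[S.m i] 0) : S.v i h = 0 := by
  set f : S.X i → ℂ := fun x => (Real.sqrt ‖h x‖ : ℂ) with hf
  set g : S.X i → ℂ := fun x => if h x = 0 then 0 else h x / (Real.sqrt ‖h x‖ : ℂ) with hg
  have hfg : h = fun x => f x * g x := by
    funext x
    by_cases hx : h x = 0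
    · simp [f, g, hx]
    · have h1 : (0:ℝ) < ‖h x‖ := norm_pos_iff.2 hx
      have h2 : (Real.sqrt ‖h x‖ : ℂ) ≠ 0 := by
        simp only [ne_eq, Complex.ofReal_eq_zero]
        exact ne_of_gt (Real.sqrt_pos.2 h1)
      simp only [f, g, if_neg hx]
      rw [mul_comm]
      exact (div_mul_cancel₀ _ h2).symm
  have hf0 : eLpNorm f ⊤ (S.m i) = 0 := by
    have : f =ᵐ[S.m i] 0 := by
      filter_upwards [hh] with x hx
      simp [f, hx]
    rw [eLpNorm_congr_ae this, eLpNorm_zero]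
  have hg0 : eLpNorm g ⊤ (S.m i) = 0 := by
    have : g =ᵐ[S.m i] 0 := by
      filter_upwards [hh] with x hx
      simp [g, hx]
    rw [eLpNorm_congr_ae this, eLpNorm_zero]
  have h5 := S.V5 i f g
  rw [hf0, hg0, zero_mul, zero_mul, add_zero, mul_zero] at h5
  rw [hfg]
  exact le_antisymm h5 (zero_le)

lemma v_ae {i : ℕ} {g h : S.X i → ℂ} (hgh : g =ᵐ[S.m i] h) : S.v i g = S.v i h := by
  have key : ∀ g' h' : S.X i → ℂ, g' =ᵐ[S.m i] h' → S.v i g' ≤ S.v i h' := by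
    intro g' h' hae
    have h2 := S.V2 i h' (fun x => g' x - h' x)
    have hd : (fun x => g' x - h' x) =ᵐ[S.m i] 0 := by
      filter_upwards [hae] with x hx
      simp [hx]
    rw [S.v_null hd, add_zero] at h2
    have : (fun x => h' x + (g' x - h' x)) = g' := by funext x; ring_nf
    rwa [this] at h2
  exact le_antisymm (key g h hgh) (key h g hgh.symm)

lemma L_null {i : ℕ} {h : S.X i → ℂ} (hh : h =ᵐ[S.m i] 0) :
    S.L i h =ᵐ[S.m (i+1)] 0 := by
  have h1 : eLpNorm h 1 (S.m i) = 0 := by rw [eLpNorm_congr_ae hh, eLpNorm_zero]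
  have hLY := S.LY1 i h
  rw [h1, S.v_null hh, add_zero, mul_zero] at hLY
  have hv : S.v (i+1) (S.L i h) = 0 := le_antisymm (le_trans le_add_self hLY) (zero_le)
  have he : eLpNorm (S.L i h) 1 (S.m (i+1)) = 0 :=
    le_antisymm (le_trans le_self_add hLY) (zero_le)
  have h3 := S.V3 (i+1) (S.L i h)
  rw [he, hv, mul_zero, add_zero, eLpNorm_exponent_top] at h3
  exact eLpNormEssSup_eq_zero_iff.1 (le_antisymm h3 (zero_le))

lemma iter_null {i : ℕ} {h : S.X i → ℂ} (hh : h =ᵐ[S.m i] 0) (k : ℕ) :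
    iterL S.L i k h =ᵐ[S.m (i+k)] 0 := by
  induction k with
  | zero => exact hh
  | succ k ih => exact S.L_null ih


/-- Extension of (LY2) to a.e.-real-valued complex functions. -/
lemma ALY2 (i : ℕ) (t : S.X i → ℂ)
    (him : (fun x => ((t x).im : ℂ)) =ᵐ[S.m i] 0) :
    S.v (i + S.N) (iterL S.L i S.N t) ≤ S.ρ * S.v i t + S.K * eLpNorm t 1 (S.m i) := by
  set p : S.X i → ℝ := fun x => (t x).re with hp
  set q : S.X i → ℝ := fun x => (t x).im with hq
  have hqnull : cR q =ᵐ[S.m i] 0 := him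
  have hdec : t = cR p + (Complex.I • cR q) := by
    funext x
    simp only [Pi.add_apply, Pi.smul_apply, smul_eq_mul, cR, p, q]
    rw [mul_comm]
    exact (Complex.re_add_im (t x)).symm
  have hI : iterL S.L i S.N (Complex.I • cR q) =ᵐ[S.m (i + S.N)] 0 := by
    rw [LinearMap.map_smul]
    have h0 := S.iter_null hqnull S.N
    filter_upwards [h0] with y hy
    simp only [Pi.smul_apply, smul_eq_mul, hy, Pi.zero_apply, mul_zero]
  have hvI : S.v (i + S.N) (iterL S.L i S.N (Complex.I • cR q)) = 0 := S.v_null hI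
  have hsplit : iterL S.L i S.N t =
      iterL S.L i S.N (cR p) + iterL S.L i S.N (Complex.I • cR q) := by
    rw [hdec, map_add]
  have hle : S.v (i + S.N) (iterL S.L i S.N t) ≤
      S.v (i + S.N) (iterL S.L i S.N (cR p)) := by
    rw [hsplit]
    refine le_trans (S.V2 (i + S.N) (iterL S.L i S.N (cR p))
      (iterL S.L i S.N (Complex.I • cR q))) ?_
    rw [hvI, add_zero]
  refine hle.trans ((S.LY2 i p).trans ?_)
  have hvp : S.v i (cR p) ≤ S.v i t := by
    have hrw : (fun x => t x + (-Complex.I) * cR q x) = cR p := by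
      funext x
      simp only [cR, q, p]
      simp [Complex.ext_iff]
    have h2 := S.V2 i t (fun x => (-Complex.I) * cR q x)
    rw [hrw] at h2
    have h1 := S.V1 i (-Complex.I) (cR q)
    rw [S.v_null hqnull, mul_zero] at h1
    rw [h1, add_zero] at h2
    exact h2
  have hep : eLpNorm (cR p) 1 (S.m i) = eLpNorm t 1 (S.m i) := by
    refine eLpNorm_congr_ae ?_
    filter_upwards [hqnull] with x hx
    have hx' : ((t x).im : ℂ) = 0 := hx
    have him0 : (t x).im = 0 := by exact_mod_cast hx'
    show ((t x).re : ℂ) = t x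
    exact Complex.ext (by simp) (by simp [him0])
  rw [hep]
  exact add_le_add (mul_le_mul_right hvp _) le_rfl


/-- The invariant carried along the trajectory: the function is a.e. equal to a bounded,
nonnegative, measurable real density of total integral one. -/
def GoodAt (i : ℕ) (t : S.X i → ℂ) : Prop :=
  ∃ ω : S.X i → ℝ, @Measurable _ _ (S.measX i) _ ω ∧ (∀ x, 0 ≤ ω x) ∧ (∃ C, ∀ x, ω x ≤ C)
    ∧ (cR ω =ᵐ[S.m i] t) ∧ (∫ x, ω x ∂ (S.m i)) = 1

lemma integrable_of_good {i : ℕ} {ω : S.X i → ℝ} (hm : @Measurable _ _ (S.measX i) _ ω)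
    (h0 : ∀ x, 0 ≤ ω x) (hC : ∃ C, ∀ x, ω x ≤ C) : Integrable ω (S.m i) := by
  letI := S.measX i
  haveI := S.mProb i
  obtain ⟨C, hC⟩ := hC
  refine Integrable.mono' (integrable_const C) hm.aestronglyMeasurable ?_
  refine ae_of_all _ fun x => ?_
  rw [Real.norm_eq_abs, abs_of_nonneg (h0 x)]
  exact hC x

lemma eLp_one_of_good {i : ℕ} {t : S.X i → ℂ} (hg : S.GoodAt i t) :
    eLpNorm t 1 (S.m i) = 1 := by
  obtain ⟨ω, hm, h0, hC, hae, h1⟩ := hg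
  rw [← eLpNorm_congr_ae hae]
  rw [eLpNorm_one_eq_lintegral_enorm]
  have : ∀ x, ‖cR ω x‖ₑ = ENNReal.ofReal (ω x) := by
    intro x
    rw [show cR ω x = ((ω x : ℝ) : ℂ) from rfl, ← ofReal_norm, Complex.norm_real,
      Real.norm_eq_abs, abs_of_nonneg (h0 x)]
  simp_rw [this]
  rw [← ofReal_integral_eq_lintegral_ofReal (S.integrable_of_good hm h0 hC)
    (ae_of_all _ h0), h1, ENNReal.ofReal_one]

lemma im_null_of_good {i : ℕ} {t : S.X i → ℂ} (hg : S.GoodAt i t) :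
    (fun x => ((t x).im : ℂ)) =ᵐ[S.m i] 0 := by
  obtain ⟨ω, hm, h0, hC, hae, h1⟩ := hg
  filter_upwards [hae] with x hx
  have : (t x).im = 0 := by rw [← hx]; simp [cR]
  simp [this]

lemma good_step {i : ℕ} {t : S.X i → ℂ} (hg : S.GoodAt i t)
    (hbv : eLpNorm t 1 (S.m i) + S.v i t < ⊤) :
    S.GoodAt (i+1) (S.L i t) ∧
      eLpNorm (S.L i t) 1 (S.m (i+1)) + S.v (i+1) (S.L i t) < ⊤ := by
  letI := S.measX i
  letI := S.measX (i+1)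
  haveI := S.mProb i
  haveI := S.mProb (i+1)
  have hbv' : eLpNorm (S.L i t) 1 (S.m (i+1)) + S.v (i+1) (S.L i t) < ⊤ :=
    lt_of_le_of_lt (S.LY1 i t) (ENNReal.mul_lt_top S.CLFin hbv)
  refine ⟨?_, hbv'⟩
  obtain ⟨ω, hωm, hω0, ⟨C, hωC⟩, hωae, hω1⟩ := hg
  have hcRm : @Measurable _ _ (S.measX i) _ (cR ω) := Complex.measurable_ofReal.comp hωm
  have hcRb : ∃ C', ∀ x, ‖cR ω x‖ ≤ C' := by
    refine ⟨C, fun x => ?_⟩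
    rw [show cR ω x = ((ω x : ℝ) : ℂ) from rfl, Complex.norm_real, Real.norm_eq_abs,
      abs_of_nonneg (hω0 x)]
    exact hωC x
  set gs := S.L i (cR ω) with hgs
  -- `L i t` is a.e. equal to `gs`
  have hdiff : (fun x => t x - cR ω x) =ᵐ[S.m i] 0 := by
    filter_upwards [hωae] with x hx
    simp [hx]
  have hLt : S.L i t =ᵐ[S.m (i+1)] gs := by
    have hsplit : S.L i t = gs + S.L i (fun x => t x - cR ω x) := by
      rw [hgs, ← map_add]
      congr 1
      funext x
      simp
    rw [hsplit]
    filter_upwards [S.L_null hdiff] with y hy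
    simp only [Pi.add_apply, hy, Pi.zero_apply, add_zero]
  -- total integral of `gs` is 1
  have hInt1 : ∫ y, gs y ∂ (S.m (i+1)) = 1 := by
    have hd := S.Ldual i (fun _ => (1:ℂ)) (cR ω) measurable_const hcRm
      ⟨1, fun y => by simp⟩ hcRb
    simp only [one_mul] at hd
    rw [← hd]
    have : ∫ x, cR ω x ∂ (S.m i) = ((∫ x, ω x ∂ (S.m i) : ℝ) : ℂ) := integral_ofReal
    rw [this, hω1, Complex.ofReal_one]
  have hIntg : Integrable gs (S.m (i+1)) := by
    by_contra hI
    rw [integral_undef hI] at hInt1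
    exact zero_ne_one hInt1
  -- set integrals of `gs` are real and nonnegative
  have hset : ∀ s : Set (S.X (i+1)), MeasurableSet s →
      ∃ r : ℝ, 0 ≤ r ∧ ∫ y in s, gs y ∂ (S.m (i+1)) = (r : ℂ) := by
    intro s hs
    set f : S.X (i+1) → ℂ := fun y => s.indicator (fun _ => (1:ℂ)) y with hfdef
    have hfm : @Measurable _ _ (S.measX (i+1)) _ f := measurable_const.indicator hs
    have hfb : ∃ C', ∀ y, ‖f y‖ ≤ C' := by
      refine ⟨1, fun y => ?_⟩
      by_cases hy : y ∈ s <;> simp [f, hy]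
    have hd := S.Ldual i f (cR ω) hfm hcRm hfb hcRb
    have hR : ∫ y, f y * gs y ∂ (S.m (i+1)) = ∫ y in s, gs y ∂ (S.m (i+1)) := by
      rw [← integral_indicator hs]
      congr 1
      funext y
      by_cases hy : y ∈ s <;> simp [f, hy]
    refine ⟨∫ x, (S.T i ⁻¹' s).indicator (fun _ => (1:ℝ)) x * ω x ∂ (S.m i), ?_, ?_⟩
    · refine integral_nonneg fun x => ?_
      refine mul_nonneg ?_ (hω0 x)
      by_cases hx : x ∈ S.T i ⁻¹' s <;> simp [hx]
    · rw [← hR, ← hd]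
      have h0 : (fun x => f (S.T i x) * cR ω x)
          = fun x => ((((S.T i ⁻¹' s).indicator (fun _ => (1:ℝ)) x * ω x : ℝ)) : ℂ) := by
        funext x
        by_cases hx : S.T i x ∈ s <;>
          simp [f, cR, hx, Set.indicator, Set.mem_preimage]
      calc ∫ x, f (S.T i x) * cR ω x ∂ (S.m i)
          = ∫ x, ((((S.T i ⁻¹' s).indicator (fun _ => (1:ℝ)) x * ω x : ℝ)) : ℂ) ∂ (S.m i) := by
            rw [h0]
        _ = _ := integral_ofReal
  -- a measurable representative
  have hsm := hIntg.aestronglyMeasurable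
  set G := hsm.mk gs with hGdef
  have hGsm : StronglyMeasurable G := hsm.stronglyMeasurable_mk
  have hGae : gs =ᵐ[S.m (i+1)] G := hsm.ae_eq_mk
  have hGint : Integrable G (S.m (i+1)) := hIntg.congr hGae
  have hsetG : ∀ s : Set (S.X (i+1)), MeasurableSet s →
      ∃ r : ℝ, 0 ≤ r ∧ ∫ y in s, G y ∂ (S.m (i+1)) = (r : ℂ) := by
    intro s hs
    obtain ⟨r, hr0, hrs⟩ := hset s hs
    refine ⟨r, hr0, ?_⟩
    rw [← hrs]
    refine setIntegral_congr_ae hs ?_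
    filter_upwards [hGae] with y hy _
    exact hy.symm
  -- imaginary part vanishes a.e.
  have hIm : (fun y => (G y).im) =ᵐ[S.m (i+1)] 0 := by
    refine Integrable.ae_eq_zero_of_forall_setIntegral_eq_zero hGint.im ?_
    intro s hs _
    obtain ⟨r, hr0, hrs⟩ := hsetG s hs
    have := integral_im (hGint.restrict (s := s))
    simp only [RCLike.im_to_complex] at this
    rw [this, hrs]
    simp
  -- real part is a.e. nonnegative
  have hRe : 0 ≤ᵐ[S.m (i+1)] (fun y => (G y).re) := by
    refine ae_nonneg_of_forall_setIntegral_nonneg hGint.re ?_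
    intro s hs _
    obtain ⟨r, hr0, hrs⟩ := hsetG s hs
    have := integral_re (hGint.restrict (s := s))
    simp only [RCLike.re_to_complex] at this
    rw [this, hrs]
    simpa using hr0
  -- essential boundedness
  have hvgs : S.v (i+1) gs < ⊤ := by
    have h1 := S.LY1 i (cR ω)
    have h2 : eLpNorm (cR ω) 1 (S.m i) + S.v i (cR ω) < ⊤ := by
      rwa [eLpNorm_congr_ae hωae, S.v_ae hωae]
    exact lt_of_le_of_lt (le_trans le_add_self h1)
      (ENNReal.mul_lt_top S.CLFin h2)
  have hegs : eLpNorm gs 1 (S.m (i+1)) < ⊤ := by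
    have h1 := S.LY1 i (cR ω)
    have h2 : eLpNorm (cR ω) 1 (S.m i) + S.v i (cR ω) < ⊤ := by
      rwa [eLpNorm_congr_ae hωae, S.v_ae hωae]
    exact lt_of_le_of_lt (le_trans le_self_add h1)
      (ENNReal.mul_lt_top S.CLFin h2)
  set B := eLpNorm gs 1 (S.m (i+1)) + S.Cvar * S.v (i+1) gs with hBdef
  have hBtop : B ≠ ⊤ := by
    rw [hBdef]
    exact (ENNReal.add_lt_top.2 ⟨hegs, ENNReal.mul_lt_top S.CvarFin hvgs⟩).ne
  have hgsB : ∀ᵐ y ∂ (S.m (i+1)), ‖gs y‖ ≤ B.toReal := by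
    have h1 : eLpNorm gs ⊤ (S.m (i+1)) ≤ B := S.V3 (i+1) gs
    rw [eLpNorm_exponent_top] at h1
    filter_upwards [ae_le_eLpNormEssSup (f := gs) (μ := S.m (i+1))] with y hy
    have h2 : (‖gs y‖₊ : ℝ≥0∞) ≤ B := le_trans hy h1
    have h3 : ‖gs y‖ = ((‖gs y‖₊ : ℝ≥0∞)).toReal := by simp
    rw [h3]
    exact ENNReal.toReal_mono hBtop h2
  -- the new density
  set ω' : S.X (i+1) → ℝ := fun y => max 0 (min (G y).re B.toReal) with hω'def
  have hω'm : @Measurable _ _ (S.measX (i+1)) _ ω' := by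
    have h1 : @Measurable _ _ (S.measX (i+1)) _ (fun y => (G y).re) :=
      Complex.measurable_re.comp hGsm.measurable
    exact measurable_const.max (h1.min measurable_const)
  have hω'0 : ∀ x, 0 ≤ ω' x := fun x => le_max_left _ _
  have hω'C : ∃ C', ∀ x, ω' x ≤ C' := by
    refine ⟨max 0 B.toReal, fun x => ?_⟩
    exact max_le_max le_rfl (min_le_right _ _)
  have hω'ae : cR ω' =ᵐ[S.m (i+1)] gs := by
    filter_upwards [hGae, hIm, hRe, hgsB] with y h1 h2 h3 h4
    have h2' : (G y).im = 0 := h2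
    have h3' : (0:ℝ) ≤ (G y).re := h3
    have h5 : (G y).re ≤ B.toReal := by
      calc (G y).re ≤ |(G y).re| := le_abs_self _
        _ ≤ ‖G y‖ := Complex.abs_re_le_norm _
        _ = ‖G y‖ := rfl
        _ = ‖gs y‖ := by rw [h1]
        _ ≤ B.toReal := h4
    show ((ω' y : ℝ) : ℂ) = gs y
    rw [hω'def]
    simp only [min_eq_left h5, max_eq_right h3']
    rw [h1]
    exact Complex.ext (by simp) (by simp [h2'])
  have hω'1 : ∫ y, ω' y ∂ (S.m (i+1)) = 1 := by
    have h1 : ∫ y, cR ω' y ∂ (S.m (i+1)) = 1 := by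
      rw [integral_congr_ae hω'ae, hInt1]
    have h2 : ∫ y, cR ω' y ∂ (S.m (i+1)) = ((∫ y, ω' y ∂ (S.m (i+1)) : ℝ) : ℂ) :=
      integral_ofReal
    rw [h2] at h1
    exact_mod_cast h1
  exact ⟨ω', hω'm, hω'0, hω'C, hω'ae.trans hLt.symm, hω'1⟩

lemma good_main : ∀ (n j : ℕ), S.GoodAt (j+n) (iterL S.L j n (fun _ => (1:ℂ))) ∧
    eLpNorm (iterL S.L j n (fun _ => (1:ℂ))) 1 (S.m (j+n)) +
      S.v (j+n) (iterL S.L j n (fun _ => (1:ℂ))) < ⊤ := by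
  intro n
  induction n with
  | zero =>
    intro j
    haveI := S.mProb j
    constructor
    · show S.GoodAt j (fun _ => (1:ℂ))
      refine ⟨fun _ => 1, measurable_const, fun x => zero_le_one, ⟨1, fun x => le_rfl⟩, ?_, ?_⟩
      · refine ae_of_all _ fun x => ?_
        simp [cR]
      · simp
    · show eLpNorm (fun _ => (1:ℂ)) 1 (S.m j) + S.v j (fun _ => (1:ℂ)) < ⊤
      have h1 : eLpNorm (fun _ => (1:ℂ)) 1 (S.m j) = 1 := by
        rw [eLpNorm_one_eq_lintegral_enorm]
        simp
      rw [h1]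
      exact ENNReal.add_lt_top.2 ⟨ENNReal.one_lt_top, lt_of_le_of_lt (S.V4 j) S.ConeFin⟩
  | succ n ih =>
    intro j
    exact S.good_step (ih j).1 (ih j).2


/-- Iterated (LY1) gives growth of BV norms by a factor `max CL 1` per step. -/
lemma chainBV (k i : ℕ) (g : S.X i → ℂ) :
    eLpNorm (iterL S.L i k g) 1 (S.m (i+k)) + S.v (i+k) (iterL S.L i k g) ≤
      (max S.CL 1)^k * (eLpNorm g 1 (S.m i) + S.v i g) := by
  induction k with
  | zero =>
    rw [pow_zero, one_mul]
    exact le_rfl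
  | succ k ih =>
    calc eLpNorm (iterL S.L i (k+1) g) 1 (S.m (i+(k+1)))
          + S.v (i+(k+1)) (iterL S.L i (k+1) g)
        ≤ S.CL * (eLpNorm (iterL S.L i k g) 1 (S.m (i+k)) + S.v (i+k) (iterL S.L i k g)) :=
          S.LY1 (i+k) (iterL S.L i k g)
      _ ≤ (max S.CL 1) * ((max S.CL 1)^k * (eLpNorm g 1 (S.m i) + S.v i g)) :=
          mul_le_mul' (le_max_left _ _) ih
      _ = (max S.CL 1)^(k+1) * (eLpNorm g 1 (S.m i) + S.v i g) := by
          rw [pow_succ, mul_comm ((max S.CL 1)^k) (max S.CL 1), mul_assoc]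

end SeqDSnoSC

/-- A fixed point style bound in `ℝ≥0∞`. -/
lemma ennreal_fix {ρ x c : ℝ≥0∞} (hρ : ρ < 1) (hx : x < ⊤) (h : x ≤ ρ * x + c) :
    x ≤ (1 - ρ)⁻¹ * c := by
  have h0 : (1:ℝ≥0∞) - ρ ≠ 0 := by
    rw [ne_eq, tsub_eq_zero_iff_le]
    exact not_le.2 hρ
  have htop : (1:ℝ≥0∞) - ρ ≠ ⊤ := (lt_of_le_of_lt tsub_le_self one_lt_top).ne
  have h1 : (1 - ρ) * x ≤ c := by
    rw [ENNReal.sub_mul (fun _ _ => hx.ne), one_mul]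
    exact tsub_le_iff_right.2 (by rwa [add_comm] at h)
  calc x = (1 - ρ)⁻¹ * ((1 - ρ) * x) := by
        rw [← mul_assoc, ENNReal.inv_mul_cancel h0 htop, one_mul]
    _ ≤ (1 - ρ)⁻¹ * c := mul_le_mul_right h1 _


/-- Assuming only (LY1) and (LY2), one has `sup_j sup_n ‖ℒ_j^n 𝟙‖_∞ < ∞`,
where `𝟙` is the constant function equal to `1`. -/
theorem sup_iterates_of_one_bounded (S : SeqDSnoSC.{u}) :
    ∃ c : ℝ≥0∞, c < ⊤ ∧ ∀ j n,
      eLpNorm (iterL S.L j n (fun _ => (1 : ℂ))) ⊤ (S.m (j+n)) ≤ c := by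
  have h0 : (1:ℝ≥0∞) - S.ρ ≠ 0 := by
    rw [ne_eq, tsub_eq_zero_iff_le]
    exact not_le.2 S.ρlt
  have htop : (1:ℝ≥0∞) - S.ρ ≠ ⊤ := (lt_of_le_of_lt tsub_le_self one_lt_top).ne
  set Bq := (1 - S.ρ)⁻¹ * S.K with hBq
  have hBqfin : Bq < ⊤ :=
    ENNReal.mul_lt_top (ENNReal.inv_lt_top.2 (pos_iff_ne_zero.2 h0)) S.KFin
  set C1 := (max S.CL 1)^S.N * (1 + S.Cone) with hC1
  have hC1fin : C1 < ⊤ := by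
    refine ENNReal.mul_lt_top (ENNReal.pow_lt_top (max_lt S.CLFin one_lt_top)) ?_
    exact ENNReal.add_lt_top.2 ⟨one_lt_top, S.ConeFin⟩
  set VB := C1 + Bq with hVBdef
  have hVBfin : VB < ⊤ := ENNReal.add_lt_top.2 ⟨hC1fin, hBqfin⟩
  have hfix : S.ρ * VB + S.K ≤ VB := by
    have hKB : S.ρ * Bq + S.K ≤ Bq := by
      have h1 : (1 - S.ρ) * Bq = S.K := by
        rw [hBq, ← mul_assoc, ENNReal.mul_inv_cancel h0 htop, one_mul]
      refine le_of_eq ?_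
      calc S.ρ * Bq + S.K = S.ρ * Bq + (1 - S.ρ) * Bq := by rw [h1]
        _ = (S.ρ + (1 - S.ρ)) * Bq := (add_mul _ _ _).symm
        _ = 1 * Bq := by rw [add_tsub_cancel_of_le S.ρlt.le]
        _ = Bq := one_mul _
    calc S.ρ * VB + S.K = S.ρ * C1 + (S.ρ * Bq + S.K) := by
          rw [hVBdef, mul_add, add_assoc]
      _ ≤ C1 + Bq := by
          refine add_le_add ?_ hKB
          calc S.ρ * C1 ≤ 1 * C1 := mul_le_mul_left S.ρlt.le _
            _ = C1 := one_mul _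
  have hVB : ∀ n j, S.v (j+n) (iterL S.L j n (fun _ => (1:ℂ))) ≤ VB := by
    rcases Nat.eq_zero_or_pos S.N with hN | hN
    · intro n j
      have hg := S.good_main n j
      have hA := S.ALY2 (j+n) (iterL S.L j n (fun _ => (1:ℂ))) (S.im_null_of_good hg.1)
      rw [S.eLp_one_of_good hg.1, mul_one] at hA
      rw [hN] at hA
      have hA' : S.v (j+n) (iterL S.L j n (fun _ => (1:ℂ))) ≤
          S.ρ * S.v (j+n) (iterL S.L j n (fun _ => (1:ℂ))) + S.K := hA
      have hfin : S.v (j+n) (iterL S.L j n (fun _ => (1:ℂ))) < ⊤ :=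
        lt_of_le_of_lt le_add_self hg.2
      exact le_trans (ennreal_fix S.ρlt hfin hA') le_add_self
    · intro n
      induction n using Nat.strong_induction_on with
      | _ n ih =>
        intro j
        by_cases hn : n < S.N
        · have hc := S.chainBV n j (fun _ => (1:ℂ))
          have h1 : eLpNorm (fun _ => (1:ℂ)) 1 (S.m j) = 1 := by
            haveI := S.mProb j
            rw [eLpNorm_one_eq_lintegral_enorm]
            simp
          refine le_trans (le_trans le_add_self hc) ?_
          rw [h1]
          calc (max S.CL 1)^n * (1 + S.v j (fun _ => (1:ℂ)))
              ≤ (max S.CL 1)^S.N * (1 + S.Cone) :=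
                mul_le_mul' (pow_le_pow_right' (le_max_right _ _) hn.le)
                  (add_le_add le_rfl (S.V4 j))
            _ = C1 := hC1.symm
            _ ≤ VB := le_self_add
        · push_neg at hn
          set m := n - S.N with hm
          have hmn : n = m + S.N := (Nat.sub_add_cancel hn).symm
          have hmlt : m < n := by
            rw [hm]
            exact Nat.sub_lt (lt_of_lt_of_le hN hn) hN
          rw [hmn]
          refine transportP (fun i f => S.v i f ≤ VB) (Nat.add_assoc j m S.N)
            (iterL_heq S.L j m (fun _ => (1:ℂ)) S.N).symm ?_
          have hg := S.good_main m j
          have hA := S.ALY2 (j+m) (iterL S.L j m (fun _ => (1:ℂ))) (S.im_null_of_good hg.1)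
          rw [S.eLp_one_of_good hg.1, mul_one] at hA
          refine le_trans hA ?_
          exact le_trans (add_le_add (mul_le_mul_right (ih m hmlt j) _) le_rfl) hfix
  refine ⟨1 + S.Cvar * VB, ?_, ?_⟩
  · exact ENNReal.add_lt_top.2 ⟨one_lt_top, ENNReal.mul_lt_top S.CvarFin hVBfin⟩
  · intro j n
    have h3 := S.V3 (j+n) (iterL S.L j n (fun _ => (1:ℂ)))
    rw [S.eLp_one_of_good (S.good_main n j).1] at h3
    exact le_trans h3 (add_le_add le_rfl (mul_le_mul_right (hVB n j) _))
end

section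
/- (Sequential Sinai's lemma.) Fix α ∈ (0,1] and let ψ_j : X̃_j → ℝ, j ∈ ℤ, satisfy sup_j ‖ψ_j‖_α < ∞. Then there exist functions u_j : X̃_j → ℝ with sup_j ‖u_j‖_{α/2} < ∞ and functions φ_j : X_j → ℝ with sup_j ‖φ_j‖_{α/2} < ∞ such that for all j, ψ_j = u_j − u_{j+1}∘T̃_j + φ_j∘π_j. Moreover, if ‖ψ_j‖_α → 0 as j → ∞ then ‖u_j‖_{α/2} → 0. -/
open Filter

/-- The two-sided sequential shift space `X̃_j`: admissible sequences `(x_{j+k})_{k∈ℤ}`,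
where the symbol at relative position `k` belongs to the alphabet `𝓐_{j+k} = {0,…,d_{j+k}−1}`
and consecutive symbols are admissible for the 0-1 matrices `A^{(j+k)}`. -/
def TwoSided (d : ℤ → ℕ) (A : ∀ j : ℤ, ℕ → ℕ → Prop) (j : ℤ) : Type :=
  {x : ℤ → ℕ // (∀ k, x k < d (j + k)) ∧ (∀ k, A (j + k) (x k) (x (k+1)))}

/-- The one-sided sequential shift space `X_j`: admissible sequences `(x_{j+k})_{k≥0}`. -/
def OneSided (d : ℤ → ℕ) (A : ∀ j : ℤ, ℕ → ℕ → Prop) (j : ℤ) : Type :=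
  {x : ℕ → ℕ // (∀ k : ℕ, x k < d (j + k)) ∧ (∀ k : ℕ, A (j + k) (x k) (x (k+1)))}

variable {d : ℤ → ℕ} {A : ∀ j : ℤ, ℕ → ℕ → Prop}

/-- The left shift `T̃_j : X̃_j → X̃_{j+1}` on the two-sided shift spaces. -/
def shiftTwo (j : ℤ) (x : TwoSided d A j) : TwoSided d A (j+1) :=
  ⟨fun k => x.1 (k+1), by
    constructor
    · intro k
      have h := x.2.1 (k+1)
      have e : j + (k + 1) = j + 1 + k := by ring
      rwa [e] at h
    · intro k
      have h := x.2.2 (k+1)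
      have e : j + (k + 1) = j + 1 + k := by ring
      rw [e] at h
      exact h⟩

/-- The left shift `T_j : X_j → X_{j+1}` on the one-sided shift spaces. -/
def shiftOne (j : ℤ) (x : OneSided d A j) : OneSided d A (j+1) :=
  ⟨fun k => x.1 (k+1), by
    constructor
    · intro k
      have h := x.2.1 (k+1)
      have e : j + ((k : ℤ) + 1) = j + 1 + k := by push_cast; ring
      rw [← e]
      convert h using 3 <;> simp
    · intro k
      have h := x.2.2 (k+1)
      have e : j + ((k : ℤ) + 1) = j + 1 + k := by push_cast; ring
      rw [← e]
      convert h using 3 <;> simp⟩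

/-- The natural projection `π_j : X̃_j → X_j` forgetting the negatively-indexed coordinates. -/
def projSFT (j : ℤ) (x : TwoSided d A j) : OneSided d A j :=
  ⟨fun k => x.1 k, by
    constructor
    · intro k; exact x.2.1 k
    · intro k
      have h := x.2.2 (k : ℤ)
      convert h using 3 <;> simp⟩

open scoped Classical in
/-- The metric `d̃_j(x,y) = 2^{−inf{|k| : x_{j+k} ≠ y_{j+k}}}` on the two-sided shift space. -/
noncomputable def distTwo (j : ℤ) (x y : TwoSided d A j) : ℝ :=
  if x.1 = y.1 then 0
  else (2 : ℝ) ^ (-(Int.ofNat (sInf {n : ℕ | ∃ k : ℤ, k.natAbs = n ∧ x.1 k ≠ y.1 k})))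

open scoped Classical in
/-- The metric `d_j(x,y) = 2^{−inf{k ≥ 0 : x_{j+k} ≠ y_{j+k}}}` on the one-sided shift space. -/
noncomputable def distOne (j : ℤ) (x y : OneSided d A j) : ℝ :=
  if x.1 = y.1 then 0
  else (2 : ℝ) ^ (-(Int.ofNat (sInf {n : ℕ | x.1 n ≠ y.1 n})))

/-- `B` is a bound for the `β`-Hölder norm (sup norm plus `β`-Hölder constant) of a function
on a space equipped with a distance function `dist`. -/
def HolderBound {X : Type*} (dist : X → X → ℝ) (β : ℝ) (B : ℝ) (f : X → ℝ) : Prop :=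
  (∀ x, |f x| ≤ B) ∧ ∀ x y, |f x - f y| ≤ B * dist x y ^ β

/-- The mixing assumption: there is `M` such that for every `j` all entries of
`A^{(j)}·A^{(j+1)}⋯A^{(j+M)}` are positive, i.e. any symbol at time `j` can be connected to
any symbol at time `j+M+1` by an admissible word. -/
def MixingSFT (d : ℤ → ℕ) (A : ∀ j : ℤ, ℕ → ℕ → Prop) (M : ℕ) : Prop :=
  ∀ (j : ℤ) (a b : ℕ), a < d j → b < d (j + (M+1)) →
    ∃ w : ℕ → ℕ, w 0 = a ∧ w (M+1) = b ∧
      (∀ k : ℕ, k ≤ M+1 → w k < d (j + k)) ∧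
      (∀ k : ℕ, k ≤ M → A (j + k) (w k) (w (k+1)))

section SinaiAux

open Finset

variable {d : ℤ → ℕ} {A : ∀ j : ℤ, ℕ → ℕ → Prop}

/-! ### Distance lemmas -/

lemma distTwo_nonneg (j : ℤ) (x y : TwoSided d A j) : 0 ≤ distTwo j x y := by
  unfold distTwo; split_ifs
  · exact le_refl 0
  · positivity

lemma distTwo_le_one (j : ℤ) (x y : TwoSided d A j) : distTwo j x y ≤ 1 := by
  unfold distTwo; split_ifs
  · exact zero_le_one
  · calc (2:ℝ) ^ (-(Int.ofNat (sInf {n : ℕ | ∃ k : ℤ, k.natAbs = n ∧ x.1 k ≠ y.1 k})))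
        ≤ (2:ℝ) ^ (0:ℤ) := by
          apply zpow_le_zpow_right₀ one_le_two
          simp only [Int.ofNat_eq_natCast]
          omega
    _ = 1 := zpow_zero 2

lemma agree_of_lt_sInf (x y : ℤ → ℕ) (k : ℤ)
    (hk : k.natAbs < sInf {n : ℕ | ∃ k : ℤ, k.natAbs = n ∧ x k ≠ y k}) : x k = y k := by
  by_contra hne
  have hmem : k.natAbs ∈ {n : ℕ | ∃ k : ℤ, k.natAbs = n ∧ x k ≠ y k} := ⟨k, rfl, hne⟩
  have := Nat.sInf_le hmem
  omega

lemma distTwo_le (j : ℤ) (x y : TwoSided d A j) (m : ℕ)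
    (h : ∀ k : ℤ, k.natAbs ≤ m → x.1 k = y.1 k) :
    distTwo j x y ≤ (2:ℝ) ^ (-((m:ℤ)+1)) := by
  unfold distTwo; split_ifs with hxy
  · positivity
  · obtain ⟨k0, hk0⟩ := Function.ne_iff.mp hxy
    have hne : {n : ℕ | ∃ k : ℤ, k.natAbs = n ∧ x.1 k ≠ y.1 k}.Nonempty :=
      ⟨k0.natAbs, k0, rfl, hk0⟩
    obtain ⟨k, hk, hkne⟩ := Nat.sInf_mem hne
    have hge : m + 1 ≤ sInf {n : ℕ | ∃ k : ℤ, k.natAbs = n ∧ x.1 k ≠ y.1 k} := by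
      by_contra hcon
      exact hkne (h k (by rw [hk]; omega))
    apply zpow_le_zpow_right₀ one_le_two
    simp only [Int.ofNat_eq_natCast]
    omega

lemma distOne_nonneg (j : ℤ) (x y : OneSided d A j) : 0 ≤ distOne j x y := by
  unfold distOne; split_ifs
  · exact le_refl 0
  · positivity

lemma distOne_le_one (j : ℤ) (x y : OneSided d A j) : distOne j x y ≤ 1 := by
  unfold distOne; split_ifs
  · exact zero_le_one
  · calc (2:ℝ) ^ (-(Int.ofNat (sInf {n : ℕ | x.1 n ≠ y.1 n})))
        ≤ (2:ℝ) ^ (0:ℤ) := by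
          apply zpow_le_zpow_right₀ one_le_two
          simp only [Int.ofNat_eq_natCast]
          omega
    _ = 1 := zpow_zero 2

lemma agree_of_lt_sInf_one (x y : ℕ → ℕ) (i : ℕ)
    (hi : i < sInf {n : ℕ | x n ≠ y n}) : x i = y i := by
  by_contra hne
  have := Nat.sInf_le (show i ∈ {n : ℕ | x n ≠ y n} from hne)
  omega

/-! ### rpow lemmas -/

lemma two_zpow_neg_rpow (m : ℕ) (β : ℝ) :
    ((2:ℝ) ^ (-(m:ℤ))) ^ β = ((2:ℝ) ^ (-β)) ^ m := by
  rw [← Real.rpow_intCast 2 (-(m:ℤ)), ← Real.rpow_natCast ((2:ℝ) ^ (-β)) m]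
  rw [← Real.rpow_mul (by norm_num), ← Real.rpow_mul (by norm_num)]
  congr 1
  push_cast
  ring

lemma rpow_pow_le (α : ℝ) (hα : 0 < α) (m N : ℕ) (h : N ≤ 2 * m) :
    ((2:ℝ) ^ (-α)) ^ m ≤ ((2:ℝ) ^ (-(α/2))) ^ N := by
  rw [← Real.rpow_natCast ((2:ℝ)^(-α)) m, ← Real.rpow_natCast ((2:ℝ)^(-(α/2))) N,
    ← Real.rpow_mul (by norm_num), ← Real.rpow_mul (by norm_num)]
  apply Real.rpow_le_rpow_of_exponent_le one_le_two
  have hc : (N:ℝ) ≤ 2 * m := by exact_mod_cast h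
  nlinarith [hα.le, mul_le_mul_of_nonneg_left hc hα.le]

end SinaiAux
section SinaiAux2

variable {d : ℤ → ℕ} {A : ∀ j : ℤ, ℕ → ℕ → Prop} {M : ℕ}

lemma exists_pred (hd : ∀ j, 1 ≤ d j) (hmix : MixingSFT d A M)
    (j : ℤ) (a : ℕ) (ha : a < d (j+1)) : ∃ a', a' < d j ∧ A j a' a := by
  obtain ⟨w, hw0, hwM, hwlt, hwA⟩ := hmix (j - M) 0 a (hd _) (by
    have e : j - (M:ℤ) + ((M:ℤ) + 1) = j + 1 := by ring
    rw [e]; exact ha)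
  refine ⟨w M, ?_, ?_⟩
  · have h := hwlt M (by omega)
    rwa [show j - (M:ℤ) + (M:ℕ) = j by push_cast; ring] at h
  · have h := hwA M le_rfl
    rw [hwM] at h
    rwa [show j - (M:ℤ) + (M:ℕ) = j by push_cast; ring] at h

lemma exists_succ (hd : ∀ j, 1 ≤ d j) (hmix : MixingSFT d A M)
    (j : ℤ) (a : ℕ) (ha : a < d j) : ∃ b, b < d (j+1) ∧ A j a b := by
  obtain ⟨w, hw0, hwM, hwlt, hwA⟩ := hmix j a 0 ha (hd _)
  refine ⟨w 1, ?_, ?_⟩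
  · have h := hwlt 1 (by omega)
    rwa [show j + ((1:ℕ):ℤ) = j + 1 by push_cast; ring] at h
  · have h := hwA 0 (by omega)
    rw [hw0] at h
    rwa [show j + ((0:ℕ):ℤ) = j by push_cast; ring] at h

noncomputable def predOf (hd : ∀ j, 1 ≤ d j) (hmix : MixingSFT d A M) (j : ℤ) (a : ℕ) : ℕ :=
  if h : a < d (j+1) then (exists_pred hd hmix j a h).choose else 0

lemma predOf_spec (hd : ∀ j, 1 ≤ d j) (hmix : MixingSFT d A M) {j : ℤ} {a : ℕ}
    (h : a < d (j+1)) : predOf hd hmix j a < d j ∧ A j (predOf hd hmix j a) a := by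
  rw [predOf, dif_pos h]
  exact (exists_pred hd hmix j a h).choose_spec

noncomputable def succOf (hd : ∀ j, 1 ≤ d j) (hmix : MixingSFT d A M) (j : ℤ) (a : ℕ) : ℕ :=
  if h : a < d j then (exists_succ hd hmix j a h).choose else 0

lemma succOf_spec (hd : ∀ j, 1 ≤ d j) (hmix : MixingSFT d A M) {j : ℤ} {a : ℕ}
    (h : a < d j) : succOf hd hmix j a < d (j+1) ∧ A j a (succOf hd hmix j a) := by
  rw [succOf, dif_pos h]
  exact (exists_succ hd hmix j a h).choose_spec

/-- a backward chain ending at `a` (at time `j`): `past j a m` is a symbol at time `j - m`. -/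
noncomputable def past (hd : ∀ j, 1 ≤ d j) (hmix : MixingSFT d A M) (j : ℤ) (a : ℕ) : ℕ → ℕ
  | 0 => a
  | m+1 => predOf hd hmix (j - (m+1)) (past hd hmix j a m)

lemma past_lt (hd : ∀ j, 1 ≤ d j) (hmix : MixingSFT d A M) {j : ℤ} {a : ℕ}
    (ha : a < d j) : ∀ m : ℕ, past hd hmix j a m < d (j - m)
  | 0 => by simpa [past] using ha
  | m+1 => by
    have ih := past_lt hd hmix ha m
    have h : past hd hmix j a m < d (j - ((m:ℤ)+1) + 1) := by
      rwa [show j - ((m:ℤ)+1) + 1 = j - m by ring]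
    have := (predOf_spec hd hmix h).1
    rw [past]
    rwa [show j - ((m:ℤ)+1) = j - ((m+1 : ℕ):ℤ) by push_cast; ring] at this

lemma past_adj (hd : ∀ j, 1 ≤ d j) (hmix : MixingSFT d A M) {j : ℤ} {a : ℕ}
    (ha : a < d j) (m : ℕ) :
    A (j - ((m+1:ℕ):ℤ)) (past hd hmix j a (m+1)) (past hd hmix j a m) := by
  have h : past hd hmix j a m < d (j - ((m:ℤ)+1) + 1) := by
    rw [show j - ((m:ℤ)+1) + 1 = j - m by ring]
    exact past_lt hd hmix ha m
  have := (predOf_spec hd hmix h).2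
  rw [past]
  rwa [show j - ((m:ℤ)+1) = j - ((m+1 : ℕ):ℤ) by push_cast; ring] at this

/-- the two-sided extension of a one-sided point, with a fixed past depending only on `y 0`. -/
noncomputable def extend (hd : ∀ j, 1 ≤ d j) (hmix : MixingSFT d A M) (j : ℤ)
    (y : OneSided d A j) : TwoSided d A j :=
  ⟨fun k => if 0 ≤ k then y.1 k.toNat else past hd hmix j (y.1 0) (-k).toNat, by
    have hy0 : y.1 0 < d j := by
      have := y.2.1 0
      rwa [show j + ((0:ℕ):ℤ) = j by push_cast; ring] at this
    constructor
    · intro k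
      beta_reduce
      by_cases hk : 0 ≤ k
      · rw [if_pos hk]
        have h := y.2.1 k.toNat
        rwa [show j + (k.toNat:ℤ) = j + k by omega] at h
      · rw [if_neg hk]
        have h := past_lt hd hmix hy0 (-k).toNat
        rwa [show j - (((-k).toNat : ℕ):ℤ) = j + k by omega] at h
    · intro k
      beta_reduce
      rcases lt_trichotomy k (-1) with hk | hk | hk
      · rw [if_neg (by omega), if_neg (by omega)]
        have hm : (((-(k+1)).toNat : ℕ):ℤ) = -(k+1) := Int.toNat_of_nonneg (by omega)
        have h := past_adj hd hmix hy0 (-(k+1)).toNat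
        have e1 : (-k).toNat = (-(k+1)).toNat + 1 := by omega
        rw [e1]
        rwa [show j - (((-(k+1)).toNat + 1 : ℕ):ℤ) = j + k by push_cast; omega] at h
      · subst hk
        rw [if_neg (by omega), if_pos (by omega)]
        have h := past_adj hd hmix hy0 0
        have e0 : ((-1:ℤ)+1).toNat = 0 := by omega
        have e1 : (-(-1:ℤ)).toNat = 1 := by omega
        rw [e0, e1]
        rwa [show j - (((0+1 : ℕ)):ℤ) = j + (-1) by push_cast; ring] at h
      · rw [if_pos (by omega), if_pos (by omega)]
        have h := y.2.2 k.toNat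
        have e1 : (k+1).toNat = k.toNat + 1 := by omega
        rw [e1]
        rwa [show j + (k.toNat:ℤ) = j + k by omega] at h⟩

lemma extend_coe_nonneg (hd : ∀ j, 1 ≤ d j) (hmix : MixingSFT d A M) (j : ℤ)
    (y : OneSided d A j) (m : ℤ) (hm : 0 ≤ m) :
    (extend hd hmix j y).1 m = y.1 m.toNat := if_pos hm

lemma extend_coe_neg (hd : ∀ j, 1 ≤ d j) (hmix : MixingSFT d A M) (j : ℤ)
    (y : OneSided d A j) (m : ℤ) (hm : m < 0) :
    (extend hd hmix j y).1 m = past hd hmix j (y.1 0) (-m).toNat := if_neg (not_le.mpr hm)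

/-- extends agreeing one-sided points agree below `N`. -/
lemma extend_agree (hd : ∀ j, 1 ≤ d j) (hmix : MixingSFT d A M) (j : ℤ)
    (y y' : OneSided d A j) (N : ℕ) (hN : 1 ≤ N)
    (hagree : ∀ i : ℕ, i < N → y.1 i = y'.1 i) :
    ∀ m : ℤ, m < N → (extend hd hmix j y).1 m = (extend hd hmix j y').1 m := by
  intro m hm
  by_cases h : 0 ≤ m
  · rw [extend_coe_nonneg hd hmix j y m h, extend_coe_nonneg hd hmix j y' m h]
    exact hagree m.toNat (by omega)
  · rw [extend_coe_neg hd hmix j y m (by omega), extend_coe_neg hd hmix j y' m (by omega),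
      hagree 0 (by omega)]

/-- a forward chain starting at `0` (at time `j`). -/
noncomputable def fut (hd : ∀ j, 1 ≤ d j) (hmix : MixingSFT d A M) (j : ℤ) : ℕ → ℕ
  | 0 => 0
  | m+1 => succOf hd hmix (j + m) (fut hd hmix j m)

lemma fut_lt (hd : ∀ j, 1 ≤ d j) (hmix : MixingSFT d A M) (j : ℤ) :
    ∀ m : ℕ, fut hd hmix j m < d (j + m)
  | 0 => by
    have := hd j
    simpa [fut] using Nat.lt_of_lt_of_le Nat.zero_lt_one this
  | m+1 => by
    have ih := fut_lt hd hmix j m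
    have := (succOf_spec hd hmix ih).1
    rw [fut]
    rwa [show j + (m:ℤ) + 1 = j + ((m+1:ℕ):ℤ) by push_cast; ring] at this

lemma fut_adj (hd : ∀ j, 1 ≤ d j) (hmix : MixingSFT d A M) (j : ℤ) (m : ℕ) :
    A (j + (m:ℤ)) (fut hd hmix j m) (fut hd hmix j (m+1)) := by
  have ih := fut_lt hd hmix j m
  have := (succOf_spec hd hmix ih).2
  rw [fut]
  exact this

noncomputable def basePoint (hd : ∀ j, 1 ≤ d j) (hmix : MixingSFT d A M) (j : ℤ) :
    OneSided d A j :=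
  ⟨fut hd hmix j, fun m => fut_lt hd hmix j m, fun m => fut_adj hd hmix j m⟩

/-- the `n`-fold shift `X̃_j → X̃_{j+n}`. -/
def iterShift (j : ℤ) (n : ℕ) (x : TwoSided d A j) : TwoSided d A (j + n) :=
  ⟨fun k => x.1 (k + n), by
    constructor
    · intro k
      have h := x.2.1 (k + n)
      rwa [show j + (k + (n:ℤ)) = j + n + k by ring] at h
    · intro k
      have h := x.2.2 (k + n)
      rw [show j + (k + (n:ℤ)) = j + n + k by ring] at h
      rwa [show k + (n:ℤ) + 1 = k + 1 + n by ring] at h⟩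

lemma psi_congr (ψ : ∀ j : ℤ, TwoSided d A j → ℝ) {j j' : ℤ} (h : j = j')
    {x : TwoSided d A j} {x' : TwoSided d A j'} (hx : x.1 = x'.1) : ψ j x = ψ j' x' := by
  subst h
  have : x = x' := Subtype.ext hx
  rw [this]

end SinaiAux2
section SinaiAux3

variable {d : ℤ → ℕ} {A : ∀ j : ℤ, ℕ → ℕ → Prop} {M : ℕ}

lemma abs_sub_le_abs_add_abs (a b : ℝ) : |a - b| ≤ |a| + |b| := by
  rw [sub_eq_add_neg]
  exact (abs_add_le _ _).trans (by rw [abs_neg])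

noncomputable def term (ψ : ∀ j : ℤ, TwoSided d A j → ℝ) (hd : ∀ j, 1 ≤ d j)
    (hmix : MixingSFT d A M) (j : ℤ) (n : ℕ) (x : TwoSided d A j) : ℝ :=
  ψ (j + n) (iterShift j n x) -
    ψ (j + n) (iterShift j n (extend hd hmix j (projSFT j x)))

lemma iter_extend_agree (hd : ∀ j, 1 ≤ d j) (hmix : MixingSFT d A M)
    (j : ℤ) (n : ℕ) (x : TwoSided d A j) (k : ℤ) (hk : k.natAbs ≤ n) :
    (iterShift j n x).1 k = (iterShift j n (extend hd hmix j (projSFT j x))).1 k := by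
  show x.1 (k + n) = (extend hd hmix j (projSFT j x)).1 (k + n)
  rw [extend_coe_nonneg hd hmix j _ (k + n) (by omega)]
  show x.1 (k + n) = x.1 ((((k + (n:ℤ)).toNat : ℕ)) : ℤ)
  exact congrArg x.1 (by omega)

lemma term_abs_le (ψ : ∀ j : ℤ, TwoSided d A j → ℝ) (hd : ∀ j, 1 ≤ d j)
    (hmix : MixingSFT d A M) {α : ℝ} (hα : 0 < α) (j : ℤ) (n : ℕ) {bn : ℝ}
    (hψb : HolderBound (distTwo (j + n)) α bn (ψ (j + n))) (hbn : 0 ≤ bn)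
    (x : TwoSided d A j) :
    |term ψ hd hmix j n x| ≤ bn * ((2:ℝ) ^ (-α)) ^ n := by
  have hr0 : (0:ℝ) < (2:ℝ) ^ (-α) := Real.rpow_pos_of_pos two_pos _
  have hr1 : (2:ℝ) ^ (-α) < 1 := Real.rpow_lt_one_of_one_lt_of_neg one_lt_two (by linarith)
  have hdle : distTwo (j + n) (iterShift j n x)
      (iterShift j n (extend hd hmix j (projSFT j x))) ≤ (2:ℝ) ^ (-((n:ℤ) + 1)) :=
    distTwo_le _ _ _ n (iter_extend_agree hd hmix j n x)
  have h4 : ((2:ℝ) ^ (-((n:ℤ) + 1))) ^ α = ((2:ℝ) ^ (-α)) ^ (n + 1) := by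
    rw [show -((n:ℤ) + 1) = -(((n + 1 : ℕ)) : ℤ) by push_cast; ring]
    exact two_zpow_neg_rpow (n + 1) α
  calc |term ψ hd hmix j n x|
      ≤ bn * distTwo (j + n) (iterShift j n x)
          (iterShift j n (extend hd hmix j (projSFT j x))) ^ α := hψb.2 _ _
    _ ≤ bn * ((2:ℝ) ^ (-α)) ^ (n + 1) := by
        rw [← h4]
        exact mul_le_mul_of_nonneg_left
          (Real.rpow_le_rpow (distTwo_nonneg _ _ _) hdle hα.le) hbn
    _ ≤ bn * ((2:ℝ) ^ (-α)) ^ n := by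
        apply mul_le_mul_of_nonneg_left _ hbn
        exact pow_le_pow_of_le_one hr0.le hr1.le (by omega)

lemma term_summable (ψ : ∀ j : ℤ, TwoSided d A j → ℝ) (hd : ∀ j, 1 ≤ d j)
    (hmix : MixingSFT d A M) {α B : ℝ} (hα : 0 < α)
    (hψ : ∀ j, HolderBound (distTwo j) α B (ψ j)) (hB : 0 ≤ B)
    (j : ℤ) (x : TwoSided d A j) :
    Summable (fun n : ℕ => term ψ hd hmix j n x) := by
  have hr0 : (0:ℝ) < (2:ℝ) ^ (-α) := Real.rpow_pos_of_pos two_pos _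
  have hr1 : (2:ℝ) ^ (-α) < 1 := Real.rpow_lt_one_of_one_lt_of_neg one_lt_two (by linarith)
  apply Summable.of_norm_bounded (g := fun n : ℕ => B * ((2:ℝ) ^ (-α)) ^ n)
    ((summable_geometric_of_lt_one hr0.le hr1).mul_left B)
  intro n
  rw [Real.norm_eq_abs]
  exact term_abs_le ψ hd hmix hα j n (hψ (j + n)) hB x

lemma term_diff_le (ψ : ∀ j : ℤ, TwoSided d A j → ℝ) (hd : ∀ j, 1 ≤ d j)
    (hmix : MixingSFT d A M) {α : ℝ} (hα : 0 < α) (j : ℤ) (n : ℕ) {bn : ℝ}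
    (hψb : HolderBound (distTwo (j + n)) α bn (ψ (j + n))) (hbn : 0 ≤ bn)
    (x y : TwoSided d A j) (N : ℕ)
    (hN : ∀ k : ℤ, k.natAbs < N → x.1 k = y.1 k) :
    |term ψ hd hmix j n x - term ψ hd hmix j n y| ≤
      2 * bn * ((2:ℝ) ^ (-α)) ^ (max n (N - n)) := by
  have hr0 : (0:ℝ) < (2:ℝ) ^ (-α) := Real.rpow_pos_of_pos two_pos _
  by_cases hc : N ≤ 2 * n
  · rw [max_eq_left (by omega)]
    calc |term ψ hd hmix j n x - term ψ hd hmix j n y|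
        ≤ |term ψ hd hmix j n x| + |term ψ hd hmix j n y| := abs_sub_le_abs_add_abs _ _
      _ ≤ bn * ((2:ℝ) ^ (-α)) ^ n + bn * ((2:ℝ) ^ (-α)) ^ n :=
          add_le_add (term_abs_le ψ hd hmix hα j n hψb hbn x)
            (term_abs_le ψ hd hmix hα j n hψb hbn y)
      _ = 2 * bn * ((2:ℝ) ^ (-α)) ^ n := by ring
  · push_neg at hc
    rw [max_eq_right (by omega)]
    set m := N - n - 1 with hm
    have hmn : m + 1 = N - n := by omega
    have hag1 : ∀ k : ℤ, k.natAbs ≤ m → (iterShift j n x).1 k = (iterShift j n y).1 k := by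
      intro k hk
      show x.1 (k + n) = y.1 (k + n)
      exact hN _ (by omega)
    have hd1 := distTwo_le (j + n) _ _ m hag1
    have hagree1 : ∀ i : ℕ, i < N → (projSFT j x).1 i = (projSFT j y).1 i := by
      intro i hi
      show x.1 i = y.1 i
      exact hN _ (by omega)
    have hag2 : ∀ k : ℤ, k.natAbs ≤ m →
        (iterShift j n (extend hd hmix j (projSFT j x))).1 k =
        (iterShift j n (extend hd hmix j (projSFT j y))).1 k := by
      intro k hk
      show (extend hd hmix j (projSFT j x)).1 (k + n) =
        (extend hd hmix j (projSFT j y)).1 (k + n)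
      exact extend_agree hd hmix j _ _ N (by omega) hagree1 (k + n) (by omega)
    have hd2 := distTwo_le (j + n) _ _ m hag2
    have key : ∀ p q : TwoSided d A (j + n), distTwo (j + n) p q ≤ (2:ℝ) ^ (-((m:ℤ) + 1)) →
        |ψ (j + n) p - ψ (j + n) q| ≤ bn * ((2:ℝ) ^ (-α)) ^ (N - n) := by
      intro p q hpq
      calc |ψ (j + n) p - ψ (j + n) q| ≤ bn * distTwo (j + n) p q ^ α := hψb.2 p q
        _ ≤ bn * ((2:ℝ) ^ (-((m:ℤ) + 1))) ^ α :=
            mul_le_mul_of_nonneg_left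
              (Real.rpow_le_rpow (distTwo_nonneg _ _ _) hpq hα.le) hbn
        _ = bn * ((2:ℝ) ^ (-α)) ^ (N - n) := by
            rw [show -((m:ℤ) + 1) = -(((m + 1 : ℕ)) : ℤ) by push_cast; ring,
              two_zpow_neg_rpow, hmn]
    have h1 := key _ _ hd1
    have h2 := key _ _ hd2
    calc |term ψ hd hmix j n x - term ψ hd hmix j n y|
        = |(ψ (j + n) (iterShift j n x) - ψ (j + n) (iterShift j n y)) -
            (ψ (j + n) (iterShift j n (extend hd hmix j (projSFT j x))) -
             ψ (j + n) (iterShift j n (extend hd hmix j (projSFT j y))))| := by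
          rw [term, term]; ring_nf
      _ ≤ |ψ (j + n) (iterShift j n x) - ψ (j + n) (iterShift j n y)| +
          |ψ (j + n) (iterShift j n (extend hd hmix j (projSFT j x))) -
           ψ (j + n) (iterShift j n (extend hd hmix j (projSFT j y)))| :=
          abs_sub_le_abs_add_abs _ _
      _ ≤ bn * ((2:ℝ) ^ (-α)) ^ (N - n) + bn * ((2:ℝ) ^ (-α)) ^ (N - n) := add_le_add h1 h2
      _ = 2 * bn * ((2:ℝ) ^ (-α)) ^ (N - n) := by ring

end SinaiAux3
section SinaiAux4

variable {d : ℤ → ℕ} {A : ∀ j : ℤ, ℕ → ℕ → Prop} {M : ℕ}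

lemma geom_max_sum (r q : ℝ) (hr0 : 0 < r) (hr1 : r < 1) (hq0 : 0 < q) (N : ℕ)
    (hkey : ∀ m : ℕ, N ≤ 2 * m → r ^ m ≤ q ^ N) :
    ∑' n : ℕ, r ^ (max n (N - n)) ≤ 2 * (1 - r)⁻¹ * q ^ N := by
  have h1r : (0:ℝ) < 1 - r := by linarith
  have hgeo : Summable (fun n : ℕ => r ^ n) := summable_geometric_of_lt_one hr0.le hr1
  have hsum : Summable (fun n : ℕ => r ^ (max n (N - n))) := by
    apply Summable.of_nonneg_of_le (fun n => by positivity) (fun n => ?_) hgeo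
    exact pow_le_pow_of_le_one hr0.le hr1.le (le_max_left _ _)
  set h := N / 2 with hh
  rw [← Summable.sum_add_tsum_nat_add (h + 1) hsum]
  have head : ∑ i ∈ Finset.range (h + 1), r ^ (max i (N - i)) ≤ (1 - r)⁻¹ * q ^ N := by
    have hb : ∀ i ∈ Finset.range (h + 1), r ^ (max i (N - i)) ≤ q ^ N * r ^ (h - i) := by
      intro i hi
      rw [Finset.mem_range] at hi
      rw [max_eq_right (by omega)]
      have e : r ^ (N - i) = r ^ (N - h) * r ^ (h - i) := by
        rw [← pow_add]; congr 1; omega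
      rw [e]
      exact mul_le_mul_of_nonneg_right (hkey (N - h) (by omega)) (by positivity)
    calc ∑ i ∈ Finset.range (h + 1), r ^ (max i (N - i))
        ≤ ∑ i ∈ Finset.range (h + 1), q ^ N * r ^ (h - i) := Finset.sum_le_sum hb
      _ = q ^ N * ∑ i ∈ Finset.range (h + 1), r ^ (h - i) := by rw [Finset.mul_sum]
      _ = q ^ N * ∑ i ∈ Finset.range (h + 1), r ^ i := by
          congr 1
          have := Finset.sum_range_reflect (fun i => r ^ i) (h + 1)
          simpa using this
      _ ≤ q ^ N * (1 - r)⁻¹ := by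
          apply mul_le_mul_of_nonneg_left _ (by positivity)
          calc ∑ i ∈ Finset.range (h + 1), r ^ i
              ≤ ∑' i : ℕ, r ^ i := Summable.sum_le_tsum _ (fun i _ => by positivity) hgeo
            _ = (1 - r)⁻¹ := tsum_geometric_of_lt_one hr0.le hr1
      _ = (1 - r)⁻¹ * q ^ N := mul_comm _ _
  have tail : ∑' n : ℕ, r ^ (max (n + (h + 1)) (N - (n + (h + 1)))) ≤ (1 - r)⁻¹ * q ^ N := by
    have hb : ∀ n : ℕ, r ^ (max (n + (h + 1)) (N - (n + (h + 1)))) ≤ q ^ N * r ^ n := by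
      intro n
      calc r ^ (max (n + (h + 1)) (N - (n + (h + 1))))
          ≤ r ^ (n + (h + 1)) := pow_le_pow_of_le_one hr0.le hr1.le (le_max_left _ _)
        _ = r ^ (h + 1) * r ^ n := by rw [← pow_add]; ring_nf
        _ ≤ q ^ N * r ^ n :=
            mul_le_mul_of_nonneg_right (hkey (h + 1) (by omega)) (by positivity)
    calc ∑' n : ℕ, r ^ (max (n + (h + 1)) (N - (n + (h + 1))))
        ≤ ∑' n : ℕ, q ^ N * r ^ n := by
          apply Summable.tsum_le_tsum hb
            ((summable_nat_add_iff (f := fun n : ℕ => r ^ (max n (N - n))) (h + 1)).2 hsum)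
            (hgeo.mul_left _)
      _ = q ^ N * ∑' n : ℕ, r ^ n := tsum_mul_left
      _ = q ^ N * (1 - r)⁻¹ := by rw [tsum_geometric_of_lt_one hr0.le hr1]
      _ = (1 - r)⁻¹ * q ^ N := mul_comm _ _
  linarith [head, tail]

noncomputable def uFn (ψ : ∀ j : ℤ, TwoSided d A j → ℝ) (hd : ∀ j, 1 ≤ d j)
    (hmix : MixingSFT d A M) (j : ℤ) (x : TwoSided d A j) : ℝ :=
  ∑' n : ℕ, term ψ hd hmix j n x

/-- main Hölder estimate for `u`. -/
lemma uFn_holder (ψ : ∀ j : ℤ, TwoSided d A j → ℝ) (hd : ∀ j, 1 ≤ d j)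
    (hmix : MixingSFT d A M) {α B : ℝ} (hα : 0 < α)
    (hψ : ∀ j, HolderBound (distTwo j) α B (ψ j)) (hB : 0 ≤ B)
    (b : ℤ → ℝ) (hb : ∀ j, HolderBound (distTwo j) α (b j) (ψ j)) (hb0 : ∀ j, 0 ≤ b j)
    (j : ℤ) (S : ℝ) (hS : ∀ n : ℕ, b (j + n) ≤ S) :
    HolderBound (distTwo j) (α/2) (4 * (1 - (2:ℝ) ^ (-α))⁻¹ * S) (uFn ψ hd hmix j) := by
  set r := (2:ℝ) ^ (-α) with hrdef
  set q := (2:ℝ) ^ (-(α/2)) with hqdef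
  have hr0 : (0:ℝ) < r := Real.rpow_pos_of_pos two_pos _
  have hr1 : r < 1 := Real.rpow_lt_one_of_one_lt_of_neg one_lt_two (by linarith)
  have hq0 : (0:ℝ) < q := Real.rpow_pos_of_pos two_pos _
  have hterm : ∀ (n : ℕ) (x : TwoSided d A j), |term ψ hd hmix j n x| ≤ b (j + n) * r ^ n :=
    fun n x => term_abs_le ψ hd hmix hα j n (hb (j + n)) (hb0 _) x
  have hsummable : ∀ x : TwoSided d A j, Summable (fun n : ℕ => term ψ hd hmix j n x) :=
    fun x => term_summable ψ hd hmix hα hψ hB j x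
  have hdiff : ∀ (x y : TwoSided d A j) (N : ℕ),
      (∀ k : ℤ, k.natAbs < N → x.1 k = y.1 k) → ∀ n : ℕ,
      |term ψ hd hmix j n x - term ψ hd hmix j n y| ≤ 2 * b (j + n) * r ^ (max n (N - n)) :=
    fun x y N hagr n => term_diff_le ψ hd hmix hα j n (hb (j + n)) (hb0 _) x y N hagr
  have hkey : ∀ m N : ℕ, N ≤ 2 * m → r ^ m ≤ q ^ N := fun m N hm => rpow_pow_le α hα m N hm
  have hdpow : ∀ x y : TwoSided d A j, x.1 ≠ y.1 →
      distTwo j x y ^ (α/2) =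
        q ^ (sInf {n : ℕ | ∃ k : ℤ, k.natAbs = n ∧ x.1 k ≠ y.1 k}) := by
    intro x y hxy
    have : distTwo j x y =
        (2:ℝ) ^ (-((sInf {n : ℕ | ∃ k : ℤ, k.natAbs = n ∧ x.1 k ≠ y.1 k} : ℕ) : ℤ)) := by
      unfold distTwo
      rw [if_neg hxy]
      simp [Int.ofNat_eq_natCast]
    rw [this, two_zpow_neg_rpow]
  have hdzero : ∀ x y : TwoSided d A j, 0 ≤ distTwo j x y ^ (α/2) :=
    fun x y => Real.rpow_nonneg (distTwo_nonneg _ _ _) _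
  clear_value r q
  clear hrdef hqdef
  have h1r : (0:ℝ) < 1 - r := by linarith
  have hgeo : Summable (fun n : ℕ => r ^ n) := summable_geometric_of_lt_one hr0.le hr1
  have hS0 : 0 ≤ S := le_trans (hb0 _) (hS 0)
  constructor
  · -- sup bound
    intro x
    have hsum : Summable (fun n : ℕ => ‖term ψ hd hmix j n x‖) := by
      apply Summable.of_nonneg_of_le (fun n => norm_nonneg _) (fun n => ?_) (hgeo.mul_left S)
      rw [Real.norm_eq_abs]
      calc |term ψ hd hmix j n x| ≤ b (j + n) * r ^ n := hterm n x
        _ ≤ S * r ^ n := mul_le_mul_of_nonneg_right (hS n) (by positivity)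
    calc |uFn ψ hd hmix j x| ≤ ∑' n : ℕ, ‖term ψ hd hmix j n x‖ := by
          rw [← Real.norm_eq_abs]
          exact norm_tsum_le_tsum_norm hsum
      _ ≤ ∑' n : ℕ, S * r ^ n := by
          apply Summable.tsum_le_tsum _ hsum (hgeo.mul_left S)
          intro n
          rw [Real.norm_eq_abs]
          calc |term ψ hd hmix j n x| ≤ b (j + n) * r ^ n := hterm n x
            _ ≤ S * r ^ n := mul_le_mul_of_nonneg_right (hS n) (by positivity)
      _ = S * (1 - r)⁻¹ := by rw [tsum_mul_left, tsum_geometric_of_lt_one hr0.le hr1]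
      _ ≤ 4 * (1 - r)⁻¹ * S := by
          nlinarith [inv_nonneg.mpr h1r.le, mul_nonneg (inv_nonneg.mpr h1r.le) hS0]
  · -- Hölder bound
    intro x y
    by_cases hxy : x.1 = y.1
    · have hxy' : x = y := Subtype.ext hxy
      subst hxy'
      simp only [sub_self, abs_zero]
      have h3 : (0:ℝ) ≤ 4 * (1 - r)⁻¹ * S := by positivity
      exact mul_nonneg h3 (hdzero x x)
    · set N := sInf {n : ℕ | ∃ k : ℤ, k.natAbs = n ∧ x.1 k ≠ y.1 k} with hN
      have hagree : ∀ k : ℤ, k.natAbs < N → x.1 k = y.1 k :=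
        fun k hk => agree_of_lt_sInf x.1 y.1 k hk
      have hsx := hsummable x
      have hsy := hsummable y
      have hmaxsum : Summable (fun n : ℕ => r ^ (max n (N - n))) := by
        apply Summable.of_nonneg_of_le (fun n => by positivity) (fun n => ?_) hgeo
        exact pow_le_pow_of_le_one hr0.le hr1.le (le_max_left _ _)
      have habs : Summable (fun n : ℕ => ‖term ψ hd hmix j n x - term ψ hd hmix j n y‖) := by
        apply Summable.of_nonneg_of_le (fun n => norm_nonneg _) (fun n => ?_)
          (hmaxsum.mul_left (2 * S))
        rw [Real.norm_eq_abs]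
        calc |term ψ hd hmix j n x - term ψ hd hmix j n y|
            ≤ 2 * b (j + n) * r ^ (max n (N - n)) := hdiff x y N hagree n
          _ ≤ 2 * S * r ^ (max n (N - n)) := by
              apply mul_le_mul_of_nonneg_right _ (by positivity)
              linarith [hS n]
      calc |uFn ψ hd hmix j x - uFn ψ hd hmix j y|
          = |∑' n : ℕ, (term ψ hd hmix j n x - term ψ hd hmix j n y)| := by
            simp only [uFn]
            rw [Summable.tsum_sub hsx hsy]
        _ ≤ ∑' n : ℕ, ‖term ψ hd hmix j n x - term ψ hd hmix j n y‖ := by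
            rw [← Real.norm_eq_abs]
            exact norm_tsum_le_tsum_norm habs
        _ ≤ ∑' n : ℕ, 2 * S * r ^ (max n (N - n)) := by
            apply Summable.tsum_le_tsum _ habs (hmaxsum.mul_left (2 * S))
            intro n
            rw [Real.norm_eq_abs]
            calc |term ψ hd hmix j n x - term ψ hd hmix j n y|
                ≤ 2 * b (j + n) * r ^ (max n (N - n)) := hdiff x y N hagree n
              _ ≤ 2 * S * r ^ (max n (N - n)) := by
                  apply mul_le_mul_of_nonneg_right _ (by positivity)
                  linarith [hS n]
        _ = 2 * S * ∑' n : ℕ, r ^ (max n (N - n)) := tsum_mul_left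
        _ ≤ 2 * S * (2 * (1 - r)⁻¹ * q ^ N) := by
            apply mul_le_mul_of_nonneg_left
              (geom_max_sum r q hr0 hr1 hq0 N (fun m hm => hkey m N hm)) (by positivity)
        _ = 4 * (1 - r)⁻¹ * S * q ^ N := by ring
        _ = 4 * (1 - r)⁻¹ * S * distTwo j x y ^ (α/2) := by rw [hdpow x y hxy]

end SinaiAux4
section SinaiAux5

variable {d : ℤ → ℕ} {A : ∀ j : ℤ, ℕ → ℕ → Prop} {M : ℕ}

noncomputable def phiFn (ψ : ∀ j : ℤ, TwoSided d A j → ℝ) (hd : ∀ j, 1 ≤ d j)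
    (hmix : MixingSFT d A M) (j : ℤ) (y : OneSided d A j) : ℝ :=
  ψ j (extend hd hmix j y) + uFn ψ hd hmix (j+1) (shiftTwo j (extend hd hmix j y))

lemma phiFn_holder (ψ : ∀ j : ℤ, TwoSided d A j → ℝ) (hd : ∀ j, 1 ≤ d j)
    (hmix : MixingSFT d A M) {α B : ℝ} (hα : 0 < α) (hα1 : α ≤ 1)
    (hψ : ∀ j, HolderBound (distTwo j) α B (ψ j)) (hB : 0 ≤ B) (j : ℤ) :
    HolderBound (distOne j) (α/2) (B + 8 * (1 - (2:ℝ) ^ (-α))⁻¹ * B) (phiFn ψ hd hmix j) := by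
  have hu : HolderBound (distTwo (j+1)) (α/2) (4 * (1 - (2:ℝ)^(-α))⁻¹ * B)
      (uFn ψ hd hmix (j+1)) :=
    uFn_holder ψ hd hmix hα hψ hB (fun _ => B) hψ (fun _ => hB) (j+1) B (fun _ => le_rfl)
  have hr0 : (0:ℝ) < (2:ℝ)^(-α) := Real.rpow_pos_of_pos two_pos _
  have hr1 : (2:ℝ)^(-α) < 1 := Real.rpow_lt_one_of_one_lt_of_neg one_lt_two (by linarith)
  have h1r : (0:ℝ) < 1 - (2:ℝ)^(-α) := by linarith
  have hinv : (0:ℝ) ≤ (1 - (2:ℝ)^(-α))⁻¹ := inv_nonneg.mpr h1r.le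
  constructor
  · intro y
    calc |phiFn ψ hd hmix j y| ≤ |ψ j (extend hd hmix j y)| +
          |uFn ψ hd hmix (j+1) (shiftTwo j (extend hd hmix j y))| := abs_add_le _ _
      _ ≤ B + 4 * (1 - (2:ℝ)^(-α))⁻¹ * B := add_le_add ((hψ j).1 _) (hu.1 _)
      _ ≤ B + 8 * (1 - (2:ℝ)^(-α))⁻¹ * B := by nlinarith [mul_nonneg hinv hB]
  · intro y y'
    by_cases hyy : y.1 = y'.1
    · have hyy' : y = y' := Subtype.ext hyy
      subst hyy'
      simp only [sub_self, abs_zero]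
      have h2 := Real.rpow_nonneg (distOne_nonneg j y y) (α/2)
      apply mul_nonneg _ h2
      nlinarith [mul_nonneg hinv hB]
    · set N1 := sInf {n : ℕ | y.1 n ≠ y'.1 n} with hN1
      have hagree : ∀ i : ℕ, i < N1 → y.1 i = y'.1 i := fun i hi => agree_of_lt_sInf_one _ _ i hi
      have hdone : distOne j y y' = (2:ℝ) ^ (-(N1:ℤ)) := by
        unfold distOne
        rw [if_neg hyy]
        simp [Int.ofNat_eq_natCast]
        rfl
      have hc1 : distTwo j (extend hd hmix j y) (extend hd hmix j y') ≤ (2:ℝ) ^ (-(N1:ℤ)) := by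
        by_cases h0 : N1 = 0
        · have h1 := distTwo_le_one j (extend hd hmix j y) (extend hd hmix j y')
          simpa [h0] using h1
        · have hN1' : 1 ≤ N1 := by omega
          have h1 := distTwo_le j (extend hd hmix j y) (extend hd hmix j y') (N1 - 1)
            (fun k hk => extend_agree hd hmix j y y' N1 hN1' hagree k (by omega))
          rwa [show -(((N1-1:ℕ):ℤ)+1) = -(N1:ℤ) by omega] at h1
      have hc2 : distTwo (j+1) (shiftTwo j (extend hd hmix j y))
          (shiftTwo j (extend hd hmix j y')) ≤ (2:ℝ) ^ (-(N1:ℤ) + 1) := by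
        by_cases h0 : N1 ≤ 1
        · calc distTwo (j+1) (shiftTwo j (extend hd hmix j y)) (shiftTwo j (extend hd hmix j y'))
              ≤ 1 := distTwo_le_one _ _ _
            _ = (2:ℝ) ^ (0:ℤ) := (zpow_zero 2).symm
            _ ≤ (2:ℝ) ^ (-(N1:ℤ) + 1) := zpow_le_zpow_right₀ one_le_two (by omega)
        · push_neg at h0
          have h1 := distTwo_le (j+1) (shiftTwo j (extend hd hmix j y))
            (shiftTwo j (extend hd hmix j y')) (N1 - 2) ?ag2
          · rwa [show -(((N1-2:ℕ):ℤ)+1) = -(N1:ℤ)+1 by omega] at h1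
          case ag2 =>
            intro k hk
            show (extend hd hmix j y).1 (k+1) = (extend hd hmix j y').1 (k+1)
            exact extend_agree hd hmix j y y' N1 (by omega) hagree (k+1) (by omega)
      have hfin1 : |ψ j (extend hd hmix j y) - ψ j (extend hd hmix j y')| ≤
          B * ((2:ℝ)^(-(α/2))) ^ N1 := by
        have h1 := (hψ j).2 (extend hd hmix j y) (extend hd hmix j y')
        have h2 : distTwo j (extend hd hmix j y) (extend hd hmix j y') ^ α ≤
            ((2:ℝ)^(-(N1:ℤ))) ^ α := Real.rpow_le_rpow (distTwo_nonneg _ _ _) hc1 hα.le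
        have h3 : ((2:ℝ)^(-(N1:ℤ))) ^ α = ((2:ℝ)^(-α)) ^ N1 := two_zpow_neg_rpow N1 α
        have h4 : ((2:ℝ)^(-α)) ^ N1 ≤ ((2:ℝ)^(-(α/2))) ^ N1 := by
          apply pow_le_pow_left₀ hr0.le
          exact Real.rpow_le_rpow_of_exponent_le one_le_two (by linarith)
        calc |ψ j (extend hd hmix j y) - ψ j (extend hd hmix j y')|
            ≤ B * distTwo j (extend hd hmix j y) (extend hd hmix j y') ^ α := h1
          _ ≤ B * ((2:ℝ)^(-(α/2))) ^ N1 := by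
              apply mul_le_mul_of_nonneg_left _ hB
              calc distTwo j (extend hd hmix j y) (extend hd hmix j y') ^ α
                  ≤ ((2:ℝ)^(-(N1:ℤ))) ^ α := h2
                _ = ((2:ℝ)^(-α)) ^ N1 := h3
                _ ≤ ((2:ℝ)^(-(α/2))) ^ N1 := h4
      have hfin2 : |uFn ψ hd hmix (j+1) (shiftTwo j (extend hd hmix j y)) -
          uFn ψ hd hmix (j+1) (shiftTwo j (extend hd hmix j y'))| ≤
          4 * (1 - (2:ℝ)^(-α))⁻¹ * B * (2 * ((2:ℝ)^(-(α/2))) ^ N1) := by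
        have h1 := hu.2 (shiftTwo j (extend hd hmix j y)) (shiftTwo j (extend hd hmix j y'))
        have h2 : distTwo (j+1) (shiftTwo j (extend hd hmix j y))
            (shiftTwo j (extend hd hmix j y')) ^ (α/2) ≤ ((2:ℝ)^(-(N1:ℤ)+1)) ^ (α/2 : ℝ) :=
          Real.rpow_le_rpow (distTwo_nonneg _ _ _) hc2 (by linarith)
        have h3 : ((2:ℝ)^(-(N1:ℤ)+1)) ^ (α/2 : ℝ) ≤ 2 * ((2:ℝ)^(-(α/2))) ^ N1 := by
          have e1 : ((2:ℝ)^(-(N1:ℤ)+1)) = 2 * (2:ℝ)^(-(N1:ℤ)) := by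
            rw [zpow_add₀ (two_ne_zero : (2:ℝ) ≠ 0), zpow_one]
            ring
          rw [e1, Real.mul_rpow (by norm_num) (by positivity), two_zpow_neg_rpow N1 (α/2)]
          have h2a : (2:ℝ) ^ (α/2 : ℝ) ≤ 2 := by
            calc (2:ℝ) ^ (α/2 : ℝ) ≤ (2:ℝ) ^ (1:ℝ) :=
                Real.rpow_le_rpow_of_exponent_le one_le_two (by linarith)
              _ = 2 := Real.rpow_one 2
          exact mul_le_mul_of_nonneg_right h2a (by positivity)
        calc |uFn ψ hd hmix (j+1) (shiftTwo j (extend hd hmix j y)) -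
            uFn ψ hd hmix (j+1) (shiftTwo j (extend hd hmix j y'))|
            ≤ 4 * (1 - (2:ℝ)^(-α))⁻¹ * B * distTwo (j+1) (shiftTwo j (extend hd hmix j y))
                (shiftTwo j (extend hd hmix j y')) ^ (α/2) := h1
          _ ≤ 4 * (1 - (2:ℝ)^(-α))⁻¹ * B * (2 * ((2:ℝ)^(-(α/2))) ^ N1) := by
              apply mul_le_mul_of_nonneg_left _ (by positivity)
              exact le_trans h2 h3
      calc |phiFn ψ hd hmix j y - phiFn ψ hd hmix j y'|
          = |(ψ j (extend hd hmix j y) - ψ j (extend hd hmix j y')) +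
              (uFn ψ hd hmix (j+1) (shiftTwo j (extend hd hmix j y)) -
               uFn ψ hd hmix (j+1) (shiftTwo j (extend hd hmix j y')))| := by
            unfold phiFn
            congr 1
            ring
        _ ≤ |ψ j (extend hd hmix j y) - ψ j (extend hd hmix j y')| +
            |uFn ψ hd hmix (j+1) (shiftTwo j (extend hd hmix j y)) -
             uFn ψ hd hmix (j+1) (shiftTwo j (extend hd hmix j y'))| := abs_add_le _ _
        _ ≤ B * ((2:ℝ)^(-(α/2))) ^ N1 +
            4 * (1 - (2:ℝ)^(-α))⁻¹ * B * (2 * ((2:ℝ)^(-(α/2))) ^ N1) := add_le_add hfin1 hfin2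
        _ = (B + 8 * (1 - (2:ℝ)^(-α))⁻¹ * B) * ((2:ℝ)^(-(α/2))) ^ N1 := by ring
        _ = (B + 8 * (1 - (2:ℝ)^(-α))⁻¹ * B) * distOne j y y' ^ (α/2) := by
            rw [hdone, two_zpow_neg_rpow N1 (α/2)]

end SinaiAux5
section SinaiAux6

variable {d : ℤ → ℕ} {A : ∀ j : ℤ, ℕ → ℕ → Prop} {M : ℕ}

lemma proj_shift_extend (hd : ∀ j, 1 ≤ d j) (hmix : MixingSFT d A M) (j : ℤ)
    (x : TwoSided d A j) :
    projSFT (j+1) (shiftTwo j (extend hd hmix j (projSFT j x))) =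
      projSFT (j+1) (shiftTwo j x) := by
  apply Subtype.ext
  funext k
  show (extend hd hmix j (projSFT j x)).1 ((k:ℤ) + 1) = x.1 ((k:ℤ) + 1)
  rw [extend_coe_nonneg hd hmix j _ _ (by omega)]
  show x.1 (((((k:ℤ) + 1).toNat : ℕ)) : ℤ) = x.1 ((k:ℤ) + 1)
  exact congrArg x.1 (by omega)

lemma cocycle (ψ : ∀ j : ℤ, TwoSided d A j → ℝ) (hd : ∀ j, 1 ≤ d j)
    (hmix : MixingSFT d A M) {α B : ℝ} (hα : 0 < α)
    (hψ : ∀ j, HolderBound (distTwo j) α B (ψ j)) (hB : 0 ≤ B) (j : ℤ) (x : TwoSided d A j) :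
    ψ j x = uFn ψ hd hmix j x - uFn ψ hd hmix (j+1) (shiftTwo j x) +
      phiFn ψ hd hmix j (projSFT j x) := by
  have hTx := term_summable ψ hd hmix hα hψ hB (j+1) (shiftTwo j x)
  have hTe := term_summable ψ hd hmix hα hψ hB (j+1)
    (shiftTwo j (extend hd hmix j (projSFT j x)))
  have hx := term_summable ψ hd hmix hα hψ hB j x
  have hproj := proj_shift_extend hd hmix j x
  have hkey : ∀ n : ℕ,
      term ψ hd hmix (j+1) n (shiftTwo j x) -
        term ψ hd hmix (j+1) n (shiftTwo j (extend hd hmix j (projSFT j x)))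
      = term ψ hd hmix j (n+1) x := by
    intro n
    unfold term
    rw [hproj]
    have e1 : ψ ((j+1) + (n:ℤ)) (iterShift (j+1) n (shiftTwo j x)) =
        ψ (j + ((n+1:ℕ):ℤ)) (iterShift j (n+1) x) := by
      apply psi_congr ψ (by push_cast; ring)
      funext k
      show x.1 (k + (n:ℤ) + 1) = x.1 (k + ((n+1:ℕ):ℤ))
      exact congrArg x.1 (by push_cast; ring)
    have e2 : ψ ((j+1) + (n:ℤ)) (iterShift (j+1) n
          (shiftTwo j (extend hd hmix j (projSFT j x)))) =
        ψ (j + ((n+1:ℕ):ℤ)) (iterShift j (n+1) (extend hd hmix j (projSFT j x))) := by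
      apply psi_congr ψ (by push_cast; ring)
      funext k
      show (extend hd hmix j (projSFT j x)).1 (k + (n:ℤ) + 1) =
        (extend hd hmix j (projSFT j x)).1 (k + ((n+1:ℕ):ℤ))
      exact congrArg (extend hd hmix j (projSFT j x)).1 (by push_cast; ring)
    rw [e1, e2]
    ring
  have hsplit : (∑' n : ℕ, term ψ hd hmix j n x) =
      term ψ hd hmix j 0 x + ∑' n : ℕ, term ψ hd hmix j (n+1) x := Summable.tsum_eq_zero_add hx
  have hdiffsum : uFn ψ hd hmix (j+1) (shiftTwo j x) -
      uFn ψ hd hmix (j+1) (shiftTwo j (extend hd hmix j (projSFT j x)))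
      = ∑' n : ℕ, term ψ hd hmix j (n+1) x := by
    simp only [uFn]
    rw [← Summable.tsum_sub hTx hTe]
    exact tsum_congr hkey
  have ht0 : term ψ hd hmix j 0 x = ψ j x - ψ j (extend hd hmix j (projSFT j x)) := by
    unfold term
    have e1 : ψ (j + ((0:ℕ):ℤ)) (iterShift j 0 x) = ψ j x := by
      apply psi_congr ψ (by push_cast; ring)
      funext k
      show x.1 (k + ((0:ℕ):ℤ)) = x.1 k
      exact congrArg x.1 (by push_cast; ring)
    have e2 : ψ (j + ((0:ℕ):ℤ)) (iterShift j 0 (extend hd hmix j (projSFT j x))) =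
        ψ j (extend hd hmix j (projSFT j x)) := by
      apply psi_congr ψ (by push_cast; ring)
      funext k
      show (extend hd hmix j (projSFT j x)).1 (k + ((0:ℕ):ℤ)) =
        (extend hd hmix j (projSFT j x)).1 k
      exact congrArg (extend hd hmix j (projSFT j x)).1 (by push_cast; ring)
    rw [e1, e2]
  have hphi : phiFn ψ hd hmix j (projSFT j x) = ψ j (extend hd hmix j (projSFT j x)) +
      uFn ψ hd hmix (j+1) (shiftTwo j (extend hd hmix j (projSFT j x))) := rfl
  have huj : uFn ψ hd hmix j x = ∑' n : ℕ, term ψ hd hmix j n x := rfl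
  rw [hphi]
  linarith [hsplit, hdiffsum, ht0, huj]

end SinaiAux6
section SinaiMain

lemma holderBound_mono {X : Type*} {dist : X → X → ℝ} (hdist : ∀ x y, 0 ≤ dist x y)
    {β B1 B2 : ℝ} {f : X → ℝ} (h : HolderBound dist β B1 f) (hB : B1 ≤ B2) :
    HolderBound dist β B2 f :=
  ⟨fun x => (h.1 x).trans hB, fun x y =>
    (h.2 x y).trans (mul_le_mul_of_nonneg_right hB (Real.rpow_nonneg (hdist x y) _))⟩

end SinaiMain

/-- **Sequential Sinai lemma.**  Let `ψ_j : X̃_j → ℝ`, `j ∈ ℤ`, satisfy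
`sup_j ‖ψ_j‖_α < ∞` for some `α ∈ (0,1]`.  Then there are `u_j : X̃_j → ℝ` and
`φ_j : X_j → ℝ` with `sup_j ‖u_j‖_{α/2} < ∞` and `sup_j ‖φ_j‖_{α/2} < ∞` such that
`ψ_j = u_j − u_{j+1}∘T̃_j + φ_j∘π_j` for all `j`; moreover if `‖ψ_j‖_α → 0` as `j → ∞`
then `‖u_j‖_{α/2} → 0`. -/
theorem sequential_sinai_lemma (d : ℤ → ℕ) (A : ∀ j : ℤ, ℕ → ℕ → Prop)
    (D : ℕ) (hD : ∀ j, d j ≤ D) (hd : ∀ j, 1 ≤ d j)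
    (M : ℕ) (hmix : MixingSFT d A M)
    (α : ℝ) (hα0 : 0 < α) (hα1 : α ≤ 1)
    (ψ : ∀ j : ℤ, TwoSided d A j → ℝ)
    (B : ℝ) (hψ : ∀ j, HolderBound (distTwo j) α B (ψ j)) :
    ∃ (u : ∀ j : ℤ, TwoSided d A j → ℝ) (φ : ∀ j : ℤ, OneSided d A j → ℝ) (B' : ℝ),
      (∀ j, HolderBound (distTwo j) (α/2) B' (u j)) ∧
      (∀ j, HolderBound (distOne j) (α/2) B' (φ j)) ∧
      (∀ j x, ψ j x = u j x - u (j+1) (shiftTwo j x) + φ j (projSFT j x)) ∧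
      -- if `‖ψ_j‖_α → 0` as `j → ∞` then `‖u_j‖_{α/2} → 0` :
      (∀ b : ℤ → ℝ, (∀ j, HolderBound (distTwo j) α (b j) (ψ j)) →
        Tendsto b atTop (nhds 0) →
        ∃ c : ℤ → ℝ, (∀ j, HolderBound (distTwo j) (α/2) (c j) (u j)) ∧
          Tendsto c atTop (nhds 0)) := by
  classical
  have hne : ∀ j : ℤ, Nonempty (TwoSided d A j) :=
    fun j => ⟨extend hd hmix j (basePoint hd hmix j)⟩
  have hB : 0 ≤ B := le_trans (abs_nonneg _) ((hψ 0).1 (hne 0).some)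
  have hr1 : (2:ℝ)^(-α) < 1 := Real.rpow_lt_one_of_one_lt_of_neg one_lt_two (by linarith)
  have h1r : (0:ℝ) < 1 - (2:ℝ)^(-α) := by linarith
  refine ⟨uFn ψ hd hmix, phiFn ψ hd hmix,
    max (4 * (1 - (2:ℝ)^(-α))⁻¹ * B) (B + 8 * (1 - (2:ℝ)^(-α))⁻¹ * B), ?_, ?_, ?_, ?_⟩
  · intro j
    exact holderBound_mono (distTwo_nonneg j)
      (uFn_holder ψ hd hmix hα0 hψ hB (fun _ => B) hψ (fun _ => hB) j B (fun _ => le_rfl))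
      (le_max_left _ _)
  · intro j
    exact holderBound_mono (distOne_nonneg j)
      (phiFn_holder ψ hd hmix hα0 hα1 hψ hB j) (le_max_right _ _)
  · intro j x
    exact cocycle ψ hd hmix hα0 hψ hB j x
  · intro b hb htend
    have hb0 : ∀ j, 0 ≤ b j := fun j => le_trans (abs_nonneg _) ((hb j).1 (hne j).some)
    have hBdd : ∀ j : ℤ, BddAbove (Set.range fun n : ℕ => b (j + n)) := by
      intro j
      obtain ⟨J, hJ⟩ := Filter.eventually_atTop.mp (htend.eventually_lt_const one_pos)
      refine ⟨max 1 (∑ i ∈ Finset.range (J - j).toNat, |b (j + i)|), ?_⟩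
      rintro _ ⟨n, rfl⟩
      by_cases hn : (J - j).toNat ≤ n
      · have hJn : J ≤ j + n := by omega
        exact le_trans (hJ _ hJn).le (le_max_left _ _)
      · push_neg at hn
        calc b (j + n) ≤ |b (j + n)| := le_abs_self _
          _ ≤ ∑ i ∈ Finset.range (J - j).toNat, |b (j + i)| :=
              Finset.single_le_sum (f := fun i : ℕ => |b (j + i)|) (fun i _ => abs_nonneg _) (Finset.mem_range.mpr hn)
          _ ≤ _ := le_max_right _ _
    set S : ℤ → ℝ := fun j => ⨆ n : ℕ, b (j + n) with hSdef
    have hSle : ∀ (j : ℤ) (n : ℕ), b (j + n) ≤ S j := fun j n => le_ciSup (hBdd j) n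
    have hS0 : ∀ j, 0 ≤ S j := fun j => le_trans (hb0 j) (by simpa using hSle j 0)
    refine ⟨fun j => 4 * (1 - (2:ℝ)^(-α))⁻¹ * S j, fun j =>
      uFn_holder ψ hd hmix hα0 hψ hB b hb hb0 j (S j) (hSle j), ?_⟩
    have hStend : Tendsto S atTop (nhds 0) := by
      rw [Metric.tendsto_atTop]
      intro ε hε
      obtain ⟨J, hJ⟩ := Filter.eventually_atTop.mp (htend.eventually_lt_const (half_pos hε))
      refine ⟨J, fun j hj => ?_⟩
      have hup : S j ≤ ε / 2 := ciSup_le (fun n => (hJ (j + n) (by omega)).le)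
      rw [Real.dist_eq, sub_zero, abs_of_nonneg (hS0 j)]
      linarith
    have hfin := hStend.const_mul (4 * (1 - (2:ℝ)^(-α))⁻¹)
    simpa using hfin
end
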